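/- arXiv:1908.09821 — 5 statements merged into one kernel-verified Lean document; each statement's English description precedes it below -/
import Mathlib

section
/- Let λ be a weak composition of n, X_λ the associated nilpotent matrix, h a Hessenberg function with h(i) < i for all i, and w ∈ S_n. Then the permutation flag wE_• = (e_{w(1)} | ⋯ | e_{w(n)}) lies in Hess(X_λ, h) if and only if the filled tableau R(w) is h-strict, i.e., ℓ ≤ h(r) whenever ℓ labels the box directly to the left of r in R(w). -/
open Matrix

attribute [local instance] Classical.propDecidable

noncomputable section

/-- Label of the box in row `i` (0-indexed from the top), column `j` (0-indexed) of the base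
filling of the weak composition `lam`: columns filled left to right, each column bottom to top,
labels `1,…,n`. -/
def baseLabel (lam : List ℕ) (i j : ℕ) : ℕ :=
  (∑ i' ∈ Finset.range lam.length, min (lam.getD i' 0) j) +
    ((Finset.Ico i lam.length).filter (fun i' => j < lam.getD i' 0)).card

def IsBox (lam : List ℕ) (i j : ℕ) : Prop :=
  i < lam.length ∧ j < lam.getD i 0

/-- The nilpotent matrix `X_λ = Σ E_{ℓ r}` over pairs where the box labeled `r` is directly right
of the box labeled `ℓ` in the base filling (labels are 1-indexed; matrix indices 0-indexed). -/
def Xlam (n : ℕ) (lam : List ℕ) : Matrix (Fin n) (Fin n) ℂ :=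
  fun ℓ r => if (∃ i j, IsBox lam i (j+1) ∧ baseLabel lam i j = (ℓ : ℕ) + 1 ∧
      baseLabel lam i (j+1) = (r : ℕ) + 1) then 1 else 0

def IsFullFlag (n : ℕ) (V : ℕ → Submodule ℂ (Fin n → ℂ)) : Prop :=
  V 0 = ⊥ ∧ (∀ i, V i ≤ V (i+1)) ∧ ∀ i, i ≤ n → Module.finrank ℂ (V i) = i

def InHess (n : ℕ) (X : Matrix (Fin n) (Fin n) ℂ) (h : ℕ → ℕ)
    (V : ℕ → Submodule ℂ (Fin n → ℂ)) : Prop :=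
  ∀ i, i ≤ n → ∀ v ∈ V i, X.mulVec v ∈ V (h i)

/-- The flag `wE_•`, whose `k`-th space is spanned by `e_{w(1)},…,e_{w(k)}` (0-indexed). -/
def permFlag (n : ℕ) (w : Equiv.Perm (Fin n)) : ℕ → Submodule ℂ (Fin n → ℂ) :=
  fun k => Submodule.span ℂ {v | ∃ j : Fin n, (j : ℕ) < k ∧ v = Pi.single (w j) (1 : ℂ)}

/-- The flag whose `k`-th space is spanned by the first `k` columns of `g`. -/
def matFlag (n : ℕ) (g : Matrix (Fin n) (Fin n) ℂ) : ℕ → Submodule ℂ (Fin n → ℂ) :=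
  fun k => Submodule.span ℂ {c | ∃ j : Fin n, (j : ℕ) < k ∧ c = fun a => g a j}

def permMat (n : ℕ) (σ : Equiv.Perm (Fin n)) : Matrix (Fin n) (Fin n) ℂ :=
  fun a b => if σ b = a then 1 else 0

def invSet (n : ℕ) (w : Equiv.Perm (Fin n)) : Finset (Fin n × Fin n) :=
  Finset.univ.filter (fun p => p.2 < p.1 ∧ w p.1 < w p.2)

def blen (n : ℕ) (w : Equiv.Perm (Fin n)) : ℕ := (invSet n w).card

open Fin.NatCast in
/-- `v = s_i s_{i+1} ⋯ s_{n-1}` (0-indexed simple transpositions `swap j (j+1)`). -/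
def vPerm (n : ℕ) (i : ℕ) : Equiv.Perm (Fin (n+1)) :=
  ((List.Ico i n).map (fun j : ℕ => Equiv.swap (j : Fin (n+1)) ((j+1 : ℕ) : Fin (n+1)))).prod

/-- `R(w)` is row-strict: the entry in the box labeled `m` of the base filling is `w⁻¹(m)`,
so entry `p` (0-indexed) occupies the box whose base label is `w(p)+1`. -/
def RowStrictT (n : ℕ) (lam : List ℕ) (w : Equiv.Perm (Fin n)) : Prop :=
  ∀ i j, IsBox lam i (j+1) → ∀ p q : Fin n,
    (w p : ℕ) + 1 = baseLabel lam i j → (w q : ℕ) + 1 = baseLabel lam i (j+1) → p < q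

def HStrictT (n : ℕ) (lam : List ℕ) (h : ℕ → ℕ) (w : Equiv.Perm (Fin n)) : Prop :=
  ∀ i j, IsBox lam i (j+1) → ∀ p q : Fin n,
    (w p : ℕ) + 1 = baseLabel lam i j → (w q : ℕ) + 1 = baseLabel lam i (j+1) →
      (p : ℕ) + 1 ≤ h ((q : ℕ) + 1)

/-- `(k,ℓ)` is a Hessenberg inversion of `R(w)` (entries 0-indexed: values are index+1). -/
def HessInvT (n : ℕ) (lam : List ℕ) (h : ℕ → ℕ) (w : Equiv.Perm (Fin n)) (k ℓ : Fin n) : Prop :=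
  ℓ < k ∧ ∃ ik jk il jl : ℕ, IsBox lam ik jk ∧ IsBox lam il jl ∧
    baseLabel lam ik jk = (w k : ℕ) + 1 ∧ baseLabel lam il jl = (w ℓ : ℕ) + 1 ∧
    (jk < jl ∨ (jk = jl ∧ il < ik)) ∧
    (∀ r : Fin n, IsBox lam il (jl + 1) → (w r : ℕ) + 1 = baseLabel lam il (jl + 1) →
      (k : ℕ) + 1 ≤ h ((r : ℕ) + 1))

/-- Springer inversions: Hessenberg inversions for `h = (0,1,…,n-1)`, i.e. `h(i) = i - 1`. -/
def SpringerInvT (n : ℕ) (lam : List ℕ) (w : Equiv.Perm (Fin n)) (k ℓ : Fin n) : Prop :=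
  HessInvT n lam (fun m => m - 1) w k ℓ

/-- The box labeled `b+1` is directly right of the box labeled `a+1` in the base filling. -/
def RightNbr (lam : List ℕ) (a b : ℕ) : Prop :=
  ∃ i j, IsBox lam i (j+1) ∧ baseLabel lam i j = a + 1 ∧ baseLabel lam i (j+1) = b + 1

/-- The box labeled `a+1` is at the end of its row in the base filling. -/
def EndOfRow (lam : List ℕ) (a : ℕ) : Prop :=
  ∃ i j, IsBox lam i j ∧ ¬ IsBox lam i (j+1) ∧ baseLabel lam i j = a + 1

def IsUpperUnip (n : ℕ) (g : Matrix (Fin n) (Fin n) ℂ) : Prop :=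
  (∀ i, g i i = 1) ∧ ∀ i j : Fin n, j < i → g i j = 0

/-- `U_i`: upper unipotent matrices whose off-diagonal entries are supported in row `i`. -/
def InUi (n : ℕ) (i : Fin n) (g : Matrix (Fin n) (Fin n) ℂ) : Prop :=
  IsUpperUnip n g ∧ ∀ a b : Fin n, a ≠ b → g a b ≠ 0 → a = i

/-- `U_0`: upper unipotent matrices of `GL_n` embedded in `GL_{n+1}` (last column trivial). -/
def InU0 (n : ℕ) (g : Matrix (Fin (n+1)) (Fin (n+1)) ℂ) : Prop :=
  IsUpperUnip (n+1) g ∧ ∀ a : Fin (n+1), a ≠ Fin.last n → g a (Fin.last n) = 0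

/-- The element of `B_k(w)` with coordinates `x`: it sends `e_{w(j)} = X_λ^m e_{w(ℓ)}` to
`e_{w(j)} + x ℓ • X_λ^m e_{w(k)}` for Springer inversions `(k,ℓ)`, fixing all other `e_{w(j)}`. -/
def BkMat (n : ℕ) (lam : List ℕ) (w : Equiv.Perm (Fin n)) (k : Fin n) (x : Fin n → ℂ) :
    Matrix (Fin n) (Fin n) ℂ :=
  1 + ∑ ℓ : Fin n, if SpringerInvT n lam w k ℓ then
      x ℓ • (∑ m ∈ Finset.range n,
        (Xlam n lam) ^ m * Matrix.single (w k) (w ℓ) (1 : ℂ) * ((Xlam n lam)ᵀ) ^ m)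
    else 0

/-- The product `g_n g_{n-1} ⋯ g_2` of elements `g_k ∈ B_k(w)` with coordinates `x k`. -/
def bigB (n : ℕ) (lam : List ℕ) (w : Equiv.Perm (Fin n)) (x : Fin n → Fin n → ℂ) :
    Matrix (Fin n) (Fin n) ℂ :=
  ((List.ofFn (fun k : Fin n => BkMat n lam w k (x k))).reverse).prod

/- Abstract fillings `T : row → column → value` of the diagram of `lam`, values in `[1, n]`. -/

def RowStrictF (lam : List ℕ) (T : ℕ → ℕ → ℕ) : Prop :=
  ∀ i j, IsBox lam i (j+1) → T i j < T i (j+1)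

def HStrictF (lam : List ℕ) (h : ℕ → ℕ) (T : ℕ → ℕ → ℕ) : Prop :=
  ∀ i j, IsBox lam i (j+1) → T i j ≤ h (T i (j+1))

def GoodFilling (lam : List ℕ) (T : ℕ → ℕ → ℕ) : Prop :=
  (∀ i j, IsBox lam i j → 1 ≤ T i j ∧ T i j ≤ lam.sum) ∧
  (∀ m, 1 ≤ m → m ≤ lam.sum → ∃ i j, IsBox lam i j ∧ T i j = m) ∧
  (∀ i j i' j', IsBox lam i j → IsBox lam i' j' → T i j = T i' j' → i = i' ∧ j = j')

def HessInvF (lam : List ℕ) (h : ℕ → ℕ) (T : ℕ → ℕ → ℕ) (k ℓ : ℕ) : Prop :=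
  ℓ < k ∧ ∃ ik jk il jl : ℕ, IsBox lam ik jk ∧ IsBox lam il jl ∧
    T ik jk = k ∧ T il jl = ℓ ∧
    (jk < jl ∨ (jk = jl ∧ il < ik)) ∧
    (IsBox lam il (jl + 1) → k ≤ h (T il (jl + 1)))

/-- `S` is obtained from `T` by sorting each column increasingly from top to bottom:
same column entries (as sets, entries being distinct), with columns of `S` increasing. -/
def ColSortedOf (lam : List ℕ) (T S : ℕ → ℕ → ℕ) : Prop :=
  (∀ j m, (∃ i, IsBox lam i j ∧ T i j = m) ↔ (∃ i, IsBox lam i j ∧ S i j = m)) ∧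
  (∀ i j, IsBox lam i j → IsBox lam (i+1) j → S i j < S (i+1) j)

def IsPartitionL (lam : List ℕ) : Prop :=
  ∀ i i', i ≤ i' → lam.getD i' 0 ≤ lam.getD i 0

def hessInvCount (lam : List ℕ) (h : ℕ → ℕ) (T : ℕ → ℕ → ℕ) : ℕ :=
  (((Finset.range (lam.sum + 1)) ×ˢ (Finset.range (lam.sum + 1))).filter
    (fun p => HessInvF lam h T p.1 p.2)).card

def Hspace (n : ℕ) (h : ℕ → ℕ) : Submodule ℂ (Matrix (Fin n) (Fin n) ℂ) :=
  Submodule.span ℂ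
    {A | ∃ i j : Fin n, (i : ℕ) + 1 ≤ h ((j : ℕ) + 1) ∧ A = Matrix.single i j (1 : ℂ)}

/-- Left-nested iterated bracket `[f (m), [f (m-1), [⋯ [f 1, f 0]]]]`. -/
def iterBr (n : ℕ) (f : ℕ → Matrix (Fin n) (Fin n) ℂ) : ℕ → Matrix (Fin n) (Fin n) ℂ
  | 0 => f 0
  | (m+1) => f (m+1) * iterBr n f m - iterBr n f m * f (m+1)

lemma mulVec_single_apply' (n : ℕ) (X : Matrix (Fin n) (Fin n) ℂ) (a b : Fin n) :
    X.mulVec (Pi.single b 1) a = X a b := by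
  simp [Matrix.mulVec, dotProduct, Pi.single_apply, mul_ite]

lemma mulVec_single_decomp (n : ℕ) (X : Matrix (Fin n) (Fin n) ℂ) (b : Fin n) :
    X.mulVec (Pi.single b 1) = ∑ a : Fin n, X a b • (Pi.single a 1 : Fin n → ℂ) := by
  funext c
  rw [mulVec_single_apply']
  simp [Pi.single_apply]

/-- the permutation flag `wE_•` lies in `Hess(X_λ, h)` iff `R(w)` is `h`-strict. -/
theorem stmt6 (n : ℕ) (lam : List ℕ) (hn : lam.sum = n) (h : ℕ → ℕ)
    (hmono : ∀ i, 1 ≤ i → i < n → h i ≤ h (i+1))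
    (hlt : ∀ i, 1 ≤ i → i ≤ n → h i < i)
    (w : Equiv.Perm (Fin n)) :
    InHess n (Xlam n lam) h (permFlag n w) ↔ HStrictT n lam h w := by
  have key : ∀ b a, 1 ≤ a → a ≤ b → b ≤ n → h a ≤ h b := by
    intro b
    induction b with
    | zero => intro a h1 h2 _; omega
    | succ b ih =>
      intro a h1 h2 h3
      rcases Nat.eq_or_lt_of_le h2 with he | hlt'
      · rw [he]
      · exact le_trans (ih a h1 (Nat.lt_succ_iff.mp hlt') (by omega))
          (hmono b (by omega) (by omega))
  constructor
  · intro hH i j hbox p q hp hq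
    by_contra hcon
    push_neg at hcon
    have hv : Pi.single (w q) (1 : ℂ) ∈ permFlag n w ((q : ℕ) + 1) :=
      Submodule.subset_span ⟨q, Nat.lt_succ_self _, rfl⟩
    have hmem := hH ((q : ℕ) + 1) q.isLt _ hv
    have hker : permFlag n w (h ((q : ℕ) + 1)) ≤
        LinearMap.ker (LinearMap.proj (w p) : (Fin n → ℂ) →ₗ[ℂ] ℂ) := by
      refine Submodule.span_le.2 ?_
      rintro v ⟨j', hj', rfl⟩
      simp only [SetLike.mem_coe, LinearMap.mem_ker, LinearMap.proj_apply]
      have hne : w p ≠ w j' := by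
        intro e
        have : p = j' := w.injective e
        subst this
        omega
      exact Pi.single_eq_of_ne hne 1
    have h0 : (Xlam n lam).mulVec (Pi.single (w q) 1) (w p) = 0 := hker hmem
    rw [mulVec_single_apply'] at h0
    unfold Xlam at h0
    rw [if_pos ⟨i, j, hbox, hp.symm, hq.symm⟩] at h0
    exact one_ne_zero h0
  · intro hS i hi
    have hle : permFlag n w i ≤
        Submodule.comap ((Xlam n lam).mulVecLin) (permFlag n w (h i)) := by
      refine Submodule.span_le.2 ?_
      rintro v ⟨q, hq, rfl⟩
      simp only [SetLike.mem_coe, Submodule.mem_comap, Matrix.mulVecLin_apply]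
      rw [mulVec_single_decomp]
      apply Submodule.sum_mem
      intro a _
      by_cases hz : Xlam n lam a (w q) = 0
      · rw [hz, zero_smul]; exact Submodule.zero_mem _
      · apply Submodule.smul_mem
        have hcond : ∃ i' j', IsBox lam i' (j' + 1) ∧
            baseLabel lam i' j' = (a : ℕ) + 1 ∧
            baseLabel lam i' (j' + 1) = ((w q : Fin n) : ℕ) + 1 := by
          by_contra hc
          unfold Xlam at hz
          rw [if_neg hc] at hz
          exact hz rfl
        obtain ⟨i', j', hb, ha, hwq⟩ := hcond
        have hpa : w (w.symm a) = a := w.apply_symm_apply a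
        have hps := hS i' j' hb (w.symm a) q (by rw [hpa]; exact ha.symm) hwq.symm
        have hq1 : h ((q : ℕ) + 1) ≤ h i := by
          rcases Nat.eq_or_lt_of_le (Nat.succ_le_of_lt hq) with he | hlt'
          · rw [show (q : ℕ) + 1 = i from he]
          · exact key i ((q : ℕ) + 1) (by omega) (by omega) hi
        have hlt2 : ((w.symm a : Fin n) : ℕ) < h i := by omega
        exact Submodule.subset_span ⟨w.symm a, hlt2, by rw [hpa]⟩
    intro v hv
    have := hle hv
    simpa using this
end
end

section
/- Let λ be a weak composition of n, h a Hessenberg function with h(i) < i, w ∈ S_n, and fix k ∈ [n]. If (k,ℓ₁) and (k,ℓ₂) are two distinct Hessenberg inversions of R(w), then k, ℓ₁, ℓ₂ all lie in pairwise distinct rows of R(w). -/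
open Matrix

attribute [local instance] Classical.propDecidable

noncomputable section

namespace Stmt8Aux

def Scol (lam : List ℕ) (j : ℕ) : ℕ :=
  ∑ i' ∈ Finset.range lam.length, min (lam.getD i' 0) j

lemma Scol_succ (lam : List ℕ) (j : ℕ) :
    Scol lam (j+1) = Scol lam j +
      ((Finset.range lam.length).filter (fun i' => j < lam.getD i' 0)).card := by
  unfold Scol
  rw [Finset.card_filter, ← Finset.sum_add_distrib]
  refine Finset.sum_congr rfl fun i _ => ?_
  split <;> omega

lemma Scol_mono (lam : List ℕ) {j j' : ℕ} (h : j ≤ j') : Scol lam j ≤ Scol lam j' :=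
  Finset.sum_le_sum fun i _ => min_le_min le_rfl h

lemma sum_getD (lam : List ℕ) :
    ∑ i' ∈ Finset.range lam.length, lam.getD i' 0 = lam.sum := by
  induction lam with
  | nil => simp
  | cons a l ih =>
    simp only [List.length_cons, Finset.sum_range_succ', List.getD_cons_succ,
      List.getD_cons_zero, List.sum_cons, ih]
    omega

lemma Scol_le_sum (lam : List ℕ) (j : ℕ) : Scol lam j ≤ lam.sum := by
  rw [← sum_getD lam]
  exact Finset.sum_le_sum fun i _ => min_le_left _ _

lemma baseLabel_gt (lam : List ℕ) {i j : ℕ} (hb : IsBox lam i j) :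
    Scol lam j < baseLabel lam i j := by
  have hm : i ∈ (Finset.Ico i lam.length).filter (fun i' => j < lam.getD i' 0) := by
    simp only [Finset.mem_filter, Finset.mem_Ico]
    exact ⟨⟨le_rfl, hb.1⟩, hb.2⟩
  have hc := Finset.card_pos.mpr ⟨i, hm⟩
  unfold baseLabel Scol at *
  omega

lemma baseLabel_le (lam : List ℕ) (i j : ℕ) :
    baseLabel lam i j ≤ Scol lam (j+1) := by
  rw [Scol_succ]
  have hc : ((Finset.Ico i lam.length).filter (fun i' => j < lam.getD i' 0)).card ≤
      ((Finset.range lam.length).filter (fun i' => j < lam.getD i' 0)).card := by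
    apply Finset.card_le_card
    apply Finset.filter_subset_filter
    rw [Finset.range_eq_Ico]
    exact Finset.Ico_subset_Ico (Nat.zero_le _) le_rfl
  unfold baseLabel Scol at *
  omega

lemma baseLabel_bounds (lam : List ℕ) {i j : ℕ} (hb : IsBox lam i j) :
    1 ≤ baseLabel lam i j ∧ baseLabel lam i j ≤ lam.sum := by
  have h1 := baseLabel_gt lam hb
  have h2 := baseLabel_le lam i j
  have h3 := Scol_le_sum lam (j+1)
  omega

lemma baseLabel_inj (lam : List ℕ) {i j i' j' : ℕ} (hb : IsBox lam i j)
    (hb' : IsBox lam i' j') (he : baseLabel lam i j = baseLabel lam i' j') :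
    i = i' ∧ j = j' := by
  have hjj : j = j' := by
    by_contra hne
    rcases Nat.lt_or_ge j j' with hlt | hge
    · have a1 := baseLabel_le lam i j
      have a2 := baseLabel_gt lam hb'
      have a3 := Scol_mono lam (show j+1 ≤ j' from hlt)
      omega
    · have hlt : j' < j := by omega
      have a1 := baseLabel_le lam i' j'
      have a2 := baseLabel_gt lam hb
      have a3 := Scol_mono lam (show j'+1 ≤ j from hlt)
      omega
  subst hjj
  refine ⟨?_, rfl⟩
  by_contra hne
  have key : ∀ a b : ℕ, a < b → IsBox lam a j →
      ((Finset.Ico b lam.length).filter (fun i' => j < lam.getD i' 0)).card <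
      ((Finset.Ico a lam.length).filter (fun i' => j < lam.getD i' 0)).card := by
    intro a b hab hba
    apply Finset.card_lt_card
    have hsub : ((Finset.Ico b lam.length).filter (fun i' => j < lam.getD i' 0)) ⊆
        ((Finset.Ico a lam.length).filter (fun i' => j < lam.getD i' 0)) :=
      Finset.filter_subset_filter _ (Finset.Ico_subset_Ico (le_of_lt hab) le_rfl)
    rw [Finset.ssubset_iff_of_subset hsub]
    refine ⟨a, ?_, ?_⟩
    · simp only [Finset.mem_filter, Finset.mem_Ico]
      exact ⟨⟨le_rfl, hba.1⟩, hba.2⟩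
    · simp only [Finset.mem_filter, Finset.mem_Ico]
      intro hmem
      omega
  rcases Nat.lt_or_ge i i' with hlt | hge
  · have := key i i' hlt hb
    unfold baseLabel at he; omega
  · have := key i' i (by omega) hb'
    unfold baseLabel at he; omega

lemma exists_entry (n : ℕ) (lam : List ℕ) (hn : lam.sum = n) (w : Equiv.Perm (Fin n))
    {i j : ℕ} (hb : IsBox lam i j) :
    ∃ p : Fin n, (w p : ℕ) + 1 = baseLabel lam i j := by
  obtain ⟨h1, h2⟩ := baseLabel_bounds lam hb
  refine ⟨w.symm ⟨baseLabel lam i j - 1, by omega⟩, ?_⟩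
  rw [Equiv.apply_symm_apply]
  simp only []
  omega

lemma row_chain (n : ℕ) (lam : List ℕ) (hn : lam.sum = n) (w : Equiv.Perm (Fin n))
    (hrs : RowStrictT n lam w) {i j j' : ℕ} (hb' : IsBox lam i j') (hjj : j < j')
    {p q : Fin n} (hp : (w p : ℕ) + 1 = baseLabel lam i j)
    (hq : (w q : ℕ) + 1 = baseLabel lam i j') : p < q := by
  induction j', hjj using Nat.le_induction generalizing q with
  | base => exact hrs i j hb' p q hp hq
  | succ m hm ih =>
    have hbm : IsBox lam i m := ⟨hb'.1, by have := hb'.2; omega⟩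
    obtain ⟨p', hp'⟩ := exists_entry n lam hn w hbm
    exact lt_trans (ih hbm hp') (hrs i m hb' p' q hp' hq)

lemma h_mono (n : ℕ) (h : ℕ → ℕ) (hmono : ∀ i, 1 ≤ i → i < n → h i ≤ h (i+1))
    {a b : ℕ} (ha : 1 ≤ a) (hab : a ≤ b) (hbn : b ≤ n) : h a ≤ h b := by
  induction b, hab using Nat.le_induction with
  | base => exact le_rfl
  | succ m hm ih => exact le_trans (ih (by omega)) (hmono m (by omega) (by omega))

end Stmt8Aux

open Stmt8Aux in
lemma same_row_contra (n : ℕ) (lam : List ℕ) (hn : lam.sum = n) (h : ℕ → ℕ)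
    (hmono : ∀ i, 1 ≤ i → i < n → h i ≤ h (i+1))
    (hlt : ∀ i, 1 ≤ i → i ≤ n → h i < i)
    (w : Equiv.Perm (Fin n)) (hrs : RowStrictT n lam w)
    (k l2 : Fin n) (hl2k : l2 < k) (i j1 j2 : ℕ) (hj : j1 < j2)
    (hb2 : IsBox lam i j2) (hlab2 : baseLabel lam i j2 = (w l2 : ℕ) + 1)
    (hcond : ∀ r : Fin n, IsBox lam i (j1 + 1) → (w r : ℕ) + 1 = baseLabel lam i (j1 + 1) →
      (k : ℕ) + 1 ≤ h ((r : ℕ) + 1)) : False := by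
  have hb1' : IsBox lam i (j1 + 1) := ⟨hb2.1, by have := hb2.2; omega⟩
  obtain ⟨r, hr⟩ := exists_entry n lam hn w hb1'
  have hkr := hcond r hb1' hr
  have hrl2 : (r : ℕ) ≤ (l2 : ℕ) := by
    rcases Nat.lt_or_ge (j1 + 1) j2 with hlt2 | hge
    · exact le_of_lt (row_chain n lam hn w hrs hb2 hlt2 hr hlab2.symm)
    · have hj2 : j1 + 1 = j2 := by omega
      subst hj2
      have : (w r : ℕ) = (w l2 : ℕ) := by omega
      have : w r = w l2 := Fin.ext this
      have : r = l2 := w.injective this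
      exact this ▸ le_rfl
  have hh : h ((r : ℕ) + 1) ≤ h ((l2 : ℕ) + 1) :=
    h_mono n h hmono (by omega) (by omega) (by have := l2.isLt; omega)
  have hl : h ((l2 : ℕ) + 1) < (l2 : ℕ) + 1 :=
    hlt _ (by omega) (by have := l2.isLt; omega)
  have : (l2 : ℕ) < (k : ℕ) := hl2k
  omega


/-- if `(k,ℓ₁)` and `(k,ℓ₂)` are distinct Hessenberg inversions of `R(w)`, then
`k`, `ℓ₁`, `ℓ₂` lie in pairwise distinct rows of `R(w)`. -/
theorem stmt8 (n : ℕ) (lam : List ℕ) (hn : lam.sum = n) (h : ℕ → ℕ)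
    (hmono : ∀ i, 1 ≤ i → i < n → h i ≤ h (i+1))
    (hlt : ∀ i, 1 ≤ i → i ≤ n → h i < i)
    (w : Equiv.Perm (Fin n))
    (hrs : RowStrictT n lam w) (hhs : HStrictT n lam h w)
    (k l1 l2 : Fin n) (hne : l1 ≠ l2)
    (h1 : HessInvT n lam h w k l1) (h2 : HessInvT n lam h w k l2) :
    ∀ ik jk i1 j1 i2 j2 : ℕ,
      IsBox lam ik jk → IsBox lam i1 j1 → IsBox lam i2 j2 →
      baseLabel lam ik jk = (w k : ℕ) + 1 →
      baseLabel lam i1 j1 = (w l1 : ℕ) + 1 →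
      baseLabel lam i2 j2 = (w l2 : ℕ) + 1 →
      ik ≠ i1 ∧ ik ≠ i2 ∧ i1 ≠ i2 := by
  intro ik jk i1 j1 i2 j2 hbk hb1 hb2 hlabk hlab1 hlab2
  obtain ⟨hl1k, ik1, jk1, i1', j1', hbk1, hb1', hlabk1, hlab1', hpos1, hcond1⟩ := h1
  obtain ⟨hl2k, ik2, jk2, i2', j2', hbk2, hb2', hlabk2, hlab2', hpos2, hcond2⟩ := h2
  obtain ⟨e1, e2⟩ := Stmt8Aux.baseLabel_inj lam hbk hbk1 (hlabk.trans hlabk1.symm)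
  subst e1; subst e2
  obtain ⟨e1, e2⟩ := Stmt8Aux.baseLabel_inj lam hbk hbk2 (hlabk.trans hlabk2.symm)
  subst e1; subst e2
  obtain ⟨e1, e2⟩ := Stmt8Aux.baseLabel_inj lam hb1 hb1' (hlab1.trans hlab1'.symm)
  subst e1; subst e2
  obtain ⟨e1, e2⟩ := Stmt8Aux.baseLabel_inj lam hb2 hb2' (hlab2.trans hlab2'.symm)
  subst e1; subst e2
  refine ⟨?_, ?_, ?_⟩
  · intro heq
    rcases hpos1 with hlt1 | ⟨hje, hie⟩
    · rw [heq] at hlabk hbk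
      exact absurd (Stmt8Aux.row_chain n lam hn w hrs hb1 hlt1 hlabk.symm hlab1.symm)
        (not_lt.mpr (le_of_lt hl1k))
    · omega
  · intro heq
    rcases hpos2 with hlt2 | ⟨hje, hie⟩
    · rw [heq] at hlabk hbk
      exact absurd (Stmt8Aux.row_chain n lam hn w hrs hb2 hlt2 hlabk.symm hlab2.symm)
        (not_lt.mpr (le_of_lt hl2k))
    · omega
  intro heq
  have hjne : j1 ≠ j2 := by
    intro hje
    apply hne
    apply w.injective
    apply Fin.ext
    have : (w l1 : ℕ) + 1 = (w l2 : ℕ) + 1 := by rw [← hlab1, ← hlab2, heq, hje]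
    omega
  rw [heq] at hlab1 hb1 hcond1
  rcases Nat.lt_or_ge j1 j2 with hltj | hgej
  · exact same_row_contra n lam hn h hmono hlt w hrs k l2 hl2k _ j1 j2 hltj hb2 hlab2 hcond1
  · have hltj : j2 < j1 := by omega
    exact same_row_contra n lam hn h hmono hlt w hrs k l1 hl1k _ j2 j1 hltj hb1 hlab1 hcond2
end
end

section
/- Let λ be a weak composition of n and w ∈ S_n with R(w) row-strict. Write w = v·y with i = w(n), v = s_i⋯s_{n-1}, y(n) = n. Let λ' be the composition of n−1 obtained by deleting the box labeled n from R(w). Then R(y) (the tableau of shape λ' for y ∈ S_{n−1}) is row-strict, R(y) equals R(w) with the box containing n deleted, and the Springer inversion sets satisfy inv_{λ'}(y) = inv_λ(w) \ inv_λ^n(w), where inv_λ^n(w) is the set of Springer inversions of R(w) whose larger entry is n. -/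
open Matrix

attribute [local instance] Classical.propDecidable

noncomputable section

/-! ### Auxiliary lemmas for `stmt9` -/

lemma sum_eq_range_getD (l : List ℕ) :
    l.sum = ∑ i ∈ Finset.range l.length, l.getD i 0 := by
  induction l with
  | nil => simp
  | cons a l ih =>
      rw [List.sum_cons, List.length_cons, Finset.sum_range_succ', ih]
      simp [List.getD, Nat.add_comm]

lemma getD_set_eq' (l : List ℕ) (i : ℕ) (hi : i < l.length) (v : ℕ) :
    (l.set i v).getD i 0 = v := by
  simp [List.getD_eq_getElem?_getD, List.getElem?_set_self', List.getElem?_eq_getElem hi]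

lemma getD_set_ne' (l : List ℕ) (i i' : ℕ) (h : i ≠ i') (v : ℕ) :
    (l.set i v).getD i' 0 = l.getD i' 0 := by
  simp [List.getD_eq_getElem?_getD, List.getElem?_set_ne h]

open Fin.NatCast in
lemma vPerm_apply (n : ℕ) : ∀ k i, n - i = k → i ≤ n → ∀ x : Fin (n+1),
    (vPerm n i x : ℕ) = if (x:ℕ) < i then (x:ℕ) else if (x:ℕ) < n then (x:ℕ)+1 else i := by
  intro k
  induction k with
  | zero =>
      intro i hk hi x
      have : i = n := by omega
      subst this
      rw [vPerm, List.Ico.self_empty]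
      simp only [List.map_nil, List.prod_nil, Equiv.Perm.coe_one, id_eq]
      have := x.isLt
      split_ifs <;> omega
  | succ m ih =>
      intro i hk hi x
      have hin : i < n := by omega
      rw [vPerm, List.Ico.eq_cons hin, List.map_cons, List.prod_cons]
      have hrec := ih (i+1) (by omega) (by omega) x
      rw [vPerm] at hrec
      simp only [Equiv.Perm.mul_apply]
      set z := ((List.Ico (i+1) n).map
        (fun j : ℕ => Equiv.swap (j : Fin (n+1)) ((j+1 : ℕ) : Fin (n+1)))).prod x with hz
      have hiv : ((i : Fin (n+1)) : ℕ) = i := Fin.val_cast_of_lt (by omega)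
      have hiv1 : (((i+1 : ℕ) : Fin (n+1)) : ℕ) = i + 1 := Fin.val_cast_of_lt (by omega)
      have hxlt := x.isLt
      rw [Equiv.swap_apply_def]
      by_cases h1 : z = (i : Fin (n+1))
      · have h1' : (z:ℕ) = i := by rw [h1, hiv]
        rw [if_pos h1, hiv1]
        split_ifs at hrec ⊢ <;> omega
      · rw [if_neg h1]
        have h1' : ¬ (z:ℕ) = i := fun hc => h1 (Fin.ext (by rw [hiv]; exact hc))
        by_cases h2 : z = ((i+1:ℕ) : Fin (n+1))
        · have h2' : (z:ℕ) = i+1 := by rw [h2, hiv1]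
          rw [if_pos h2, hiv]
          split_ifs at hrec ⊢ <;> omega
        · rw [if_neg h2]
          have h2' : ¬ (z:ℕ) = i+1 := fun hc => h2 (Fin.ext (by rw [hiv1]; exact hc))
          split_ifs at hrec ⊢ <;> omega

lemma baseLabel_pos {lam : List ℕ} {a b : ℕ} (h : IsBox lam a b) : 1 ≤ baseLabel lam a b := by
  have hmem : a ∈ (Finset.Ico a lam.length).filter (fun i' => b < lam.getD i' 0) :=
    Finset.mem_filter.mpr ⟨Finset.mem_Ico.mpr ⟨le_refl a, h.1⟩, h.2⟩
  have := Finset.card_pos.mpr ⟨a, hmem⟩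
  unfold baseLabel; omega

lemma baseLabel_le_sum (lam : List ℕ) (a b : ℕ) : baseLabel lam a b ≤ lam.sum := by
  unfold baseLabel
  have h1 : ((Finset.Ico a lam.length).filter (fun i' => b < lam.getD i' 0)).card ≤
      ((Finset.range lam.length).filter (fun i' => b < lam.getD i' 0)).card := by
    apply Finset.card_le_card
    apply Finset.filter_subset_filter
    intro x hx
    simp only [Finset.mem_Ico] at hx
    simp only [Finset.mem_range]
    omega
  rw [Finset.card_filter, Finset.card_filter] at h1
  rw [Finset.card_filter]
  have h2 : (∑ i' ∈ Finset.range lam.length, min (lam.getD i' 0) b) +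
      (∑ i' ∈ Finset.range lam.length, if b < lam.getD i' 0 then 1 else 0) ≤ lam.sum := by
    rw [sum_eq_range_getD, ← Finset.sum_add_distrib]
    apply Finset.sum_le_sum
    intro i' _
    split_ifs <;> omega
  omega

lemma baseLabel_shift {lam : List ℕ} {i0 j0 : ℕ} (hi0 : i0 < lam.length)
    (hrow : lam.getD i0 0 = j0 + 1) (a b : ℕ) :
    baseLabel lam a b = baseLabel (lam.set i0 j0) a b + (if j0 < b then 1 else 0) +
      (if a ≤ i0 ∧ b = j0 then 1 else 0) := by
  unfold baseLabel
  rw [List.length_set]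
  have e1 : ∑ i' ∈ Finset.range lam.length, min (lam.getD i' 0) b =
      (∑ i' ∈ Finset.range lam.length, min ((lam.set i0 j0).getD i' 0) b) +
        (if j0 < b then 1 else 0) := by
    have hpt : ∀ i' ∈ Finset.range lam.length, min (lam.getD i' 0) b =
        min ((lam.set i0 j0).getD i' 0) b +
          (if i' = i0 then (if j0 < b then 1 else 0) else 0) := by
      intro i' _
      by_cases h : i' = i0
      · subst h
        rw [getD_set_eq' _ _ hi0, hrow, if_pos rfl]
        split_ifs <;> omega
      · rw [getD_set_ne' _ _ _ (Ne.symm h), if_neg h]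
        omega
    rw [Finset.sum_congr rfl hpt, Finset.sum_add_distrib, Finset.sum_ite_eq',
      if_pos (Finset.mem_range.mpr hi0)]
  have e2 : ((Finset.Ico a lam.length).filter (fun i' => b < lam.getD i' 0)).card =
      ((Finset.Ico a lam.length).filter (fun i' => b < (lam.set i0 j0).getD i' 0)).card +
        (if a ≤ i0 ∧ b = j0 then 1 else 0) := by
    rw [Finset.card_filter, Finset.card_filter]
    have hpt : ∀ i' ∈ Finset.Ico a lam.length,
        (if b < lam.getD i' 0 then 1 else 0) =
          (if b < (lam.set i0 j0).getD i' 0 then 1 else 0) +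
            (if i' = i0 then (if b = j0 then 1 else 0) else 0) := by
      intro i' _
      by_cases h : i' = i0
      · subst h
        rw [getD_set_eq' _ _ hi0, hrow, if_pos rfl]
        split_ifs <;> omega
      · rw [getD_set_ne' _ _ _ (Ne.symm h), if_neg h]
        omega
    rw [Finset.sum_congr rfl hpt, Finset.sum_add_distrib, Finset.sum_ite_eq']
    by_cases ha : a ≤ i0
    · rw [if_pos (Finset.mem_Ico.mpr ⟨ha, hi0⟩)]
      split_ifs <;> omega
    · rw [if_neg (fun hc => ha (Finset.mem_Ico.mp hc).1)]
      split_ifs <;> omega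
  rw [e1, e2]
  ring

lemma label_gt {lam : List ℕ} {i0 j0 a b : ℕ} (hbox0 : IsBox lam i0 j0)
    (hab : IsBox lam a b) (hB : j0 < b ∨ (b = j0 ∧ a < i0)) :
    baseLabel lam i0 j0 < baseLabel lam a b := by
  unfold baseLabel
  rcases hB with hb | ⟨heq, hai⟩
  · have h1 : ((Finset.Ico i0 lam.length).filter (fun i' => j0 < lam.getD i' 0)).card ≤
        ((Finset.range lam.length).filter (fun i' => j0 < lam.getD i' 0)).card :=
      Finset.card_le_card (Finset.filter_subset_filter _ (by
        intro x hx
        simp only [Finset.mem_Ico] at hx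
        simp only [Finset.mem_range]
        omega))
    have h2 : (∑ i' ∈ Finset.range lam.length, min (lam.getD i' 0) j0) +
        ((Finset.range lam.length).filter (fun i' => j0 < lam.getD i' 0)).card ≤
        ∑ i' ∈ Finset.range lam.length, min (lam.getD i' 0) b := by
      rw [Finset.card_filter, ← Finset.sum_add_distrib]
      apply Finset.sum_le_sum
      intro i' _
      split_ifs <;> omega
    have h3 : 1 ≤ ((Finset.Ico a lam.length).filter (fun i' => b < lam.getD i' 0)).card :=
      Finset.card_pos.mpr ⟨a, Finset.mem_filter.mpr ⟨Finset.mem_Ico.mpr ⟨le_refl a, hab.1⟩, hab.2⟩⟩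
    omega
  · subst heq
    have hsplit : Finset.Ico a lam.length = Finset.Ico a i0 ∪ Finset.Ico i0 lam.length :=
      (Finset.Ico_union_Ico_eq_Ico hai.le hbox0.1.le).symm
    rw [hsplit, Finset.filter_union, Finset.card_union_of_disjoint
      (Finset.disjoint_filter_filter (Finset.Ico_disjoint_Ico_consecutive a i0 lam.length))]
    have h3 : 1 ≤ ((Finset.Ico a i0).filter (fun i' => b < lam.getD i' 0)).card :=
      Finset.card_pos.mpr ⟨a, Finset.mem_filter.mpr ⟨Finset.mem_Ico.mpr ⟨le_refl a, hai⟩, hab.2⟩⟩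
    omega

lemma label_lt {lam : List ℕ} {i0 j0 a b : ℕ} (hbox0 : IsBox lam i0 j0)
    (hab : IsBox lam a b) (hA : b < j0 ∨ (b = j0 ∧ i0 < a)) :
    baseLabel lam a b < baseLabel lam i0 j0 := by
  unfold baseLabel
  rcases hA with hb | ⟨heq, hai⟩
  · have h1 : ((Finset.Ico a lam.length).filter (fun i' => b < lam.getD i' 0)).card ≤
        ((Finset.range lam.length).filter (fun i' => b < lam.getD i' 0)).card :=
      Finset.card_le_card (Finset.filter_subset_filter _ (by
        intro x hx
        simp only [Finset.mem_Ico] at hx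
        simp only [Finset.mem_range]
        omega))
    have h2 : (∑ i' ∈ Finset.range lam.length, min (lam.getD i' 0) b) +
        ((Finset.range lam.length).filter (fun i' => b < lam.getD i' 0)).card ≤
        ∑ i' ∈ Finset.range lam.length, min (lam.getD i' 0) j0 := by
      rw [Finset.card_filter, ← Finset.sum_add_distrib]
      apply Finset.sum_le_sum
      intro i' _
      split_ifs <;> omega
    have h3 : 1 ≤ ((Finset.Ico i0 lam.length).filter (fun i' => j0 < lam.getD i' 0)).card :=
      Finset.card_pos.mpr ⟨i0, Finset.mem_filter.mpr
        ⟨Finset.mem_Ico.mpr ⟨le_refl i0, hbox0.1⟩, hbox0.2⟩⟩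
    omega
  · subst heq
    have hsplit : Finset.Ico i0 lam.length = Finset.Ico i0 a ∪ Finset.Ico a lam.length :=
      (Finset.Ico_union_Ico_eq_Ico hai.le hab.1.le).symm
    rw [hsplit, Finset.filter_union, Finset.card_union_of_disjoint
      (Finset.disjoint_filter_filter (Finset.Ico_disjoint_Ico_consecutive i0 a lam.length))]
    have h3 : 1 ≤ ((Finset.Ico i0 a).filter (fun i' => b < lam.getD i' 0)).card :=
      Finset.card_pos.mpr ⟨i0, Finset.mem_filter.mpr
        ⟨Finset.mem_Ico.mpr ⟨le_refl i0, hai⟩, hbox0.2⟩⟩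
    omega


/-- for `w` with `R(w)` row-strict and canonical factorization `w = v·y`,
`y` fixes `n`, `R(y)` (of shape `λ'`, obtained by deleting the box containing the largest entry)
is row-strict and equals `R(w)` with that box deleted, and
`inv_{λ'}(y) = inv_λ(w) \ inv_λ^n(w)`. -/
theorem stmt9 (n : ℕ) (lam : List ℕ) (hn : lam.sum = n + 1)
    (w v y : Equiv.Perm (Fin (n+1)))
    (hv : v = vPerm n (w (Fin.last n) : ℕ)) (hy : y = v⁻¹ * w)
    (hrs : RowStrictT (n+1) lam w)
    (i0 j0 : ℕ) (hbox : IsBox lam i0 j0)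
    (hlab : baseLabel lam i0 j0 = (w (Fin.last n) : ℕ) + 1)
    (lam' : List ℕ) (hlam' : lam' = lam.set i0 (lam.getD i0 0 - 1)) :
    y (Fin.last n) = Fin.last n ∧
    RowStrictT (n+1) lam' y ∧
    (∀ a b : ℕ, IsBox lam' a b → ∀ p q : Fin (n+1),
      (y p : ℕ) + 1 = baseLabel lam' a b → (w q : ℕ) + 1 = baseLabel lam a b → p = q) ∧
    (∀ k ℓ : Fin (n+1),
      SpringerInvT (n+1) lam' y k ℓ ↔
        (SpringerInvT (n+1) lam w k ℓ ∧ k ≠ Fin.last n)) := by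
  -- basic facts about `v` and `y`
  have hiw : (w (Fin.last n) : ℕ) ≤ n := Nat.lt_succ_iff.mp (w (Fin.last n)).isLt
  have hvapp : ∀ x : Fin (n+1), (v x : ℕ) =
      if (x:ℕ) < (w (Fin.last n) : ℕ) then (x:ℕ)
      else if (x:ℕ) < n then (x:ℕ)+1 else (w (Fin.last n) : ℕ) := by
    intro x
    rw [hv]
    exact vPerm_apply n (n - (w (Fin.last n) : ℕ)) _ rfl hiw x
  have hvlast : v (Fin.last n) = w (Fin.last n) := by
    apply Fin.ext
    rw [hvapp]
    simp only [Fin.val_last]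
    split_ifs <;> omega
  have hylast : y (Fin.last n) = Fin.last n := by
    rw [hy]
    simp only [Equiv.Perm.mul_apply]
    rw [← hvlast]
    exact v.symm_apply_apply (Fin.last n)
  have hylt : ∀ q : Fin (n+1), (w q : ℕ) < (w (Fin.last n) : ℕ) → (y q : ℕ) = (w q : ℕ) := by
    intro q hq
    have hfix : v (w q) = w q := Fin.ext (by rw [hvapp, if_pos hq])
    have h2 : w q = v⁻¹ (w q) := Equiv.Perm.eq_inv_iff_eq.mpr hfix
    rw [hy]
    simp only [Equiv.Perm.mul_apply]
    rw [← h2]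
  have hygt : ∀ q : Fin (n+1), (w (Fin.last n) : ℕ) < (w q : ℕ) →
      (y q : ℕ) = (w q : ℕ) - 1 := by
    intro q hq
    have hwq : (w q : ℕ) < n + 1 := (w q).isLt
    set z : Fin (n+1) := ⟨(w q : ℕ) - 1, by omega⟩ with hzdef
    have hzv : (z : ℕ) = (w q : ℕ) - 1 := rfl
    have hfix : v z = w q := by
      apply Fin.ext
      rw [hvapp]
      split_ifs <;> omega
    have h2 : z = v⁻¹ (w q) := Equiv.Perm.eq_inv_iff_eq.mpr hfix
    rw [hy]
    simp only [Equiv.Perm.mul_apply]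
    rw [← h2]
  -- entries with a given label
  have entry : ∀ L : ℕ, 1 ≤ L → L ≤ n + 1 → ∃ q : Fin (n+1), (w q : ℕ) + 1 = L := by
    intro L h1 h2
    refine ⟨w.symm ⟨L - 1, by omega⟩, ?_⟩
    rw [Equiv.apply_symm_apply]
    show L - 1 + 1 = L
    omega
  have entry' : ∀ L : ℕ, 1 ≤ L → L ≤ n + 1 → ∃ q : Fin (n+1), (y q : ℕ) + 1 = L := by
    intro L h1 h2
    refine ⟨y.symm ⟨L - 1, by omega⟩, ?_⟩
    rw [Equiv.apply_symm_apply]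
    show L - 1 + 1 = L
    omega
  -- the box of the largest entry ends its row
  have hrow0 : lam.getD i0 0 = j0 + 1 := by
    by_contra hne
    have hb1 : IsBox lam i0 (j0+1) := ⟨hbox.1, by have := hbox.2; omega⟩
    have hble := baseLabel_le_sum lam i0 (j0+1)
    have hbpos := baseLabel_pos hb1
    obtain ⟨q, hq⟩ := entry (baseLabel lam i0 (j0+1)) hbpos (by omega)
    have := hrs i0 j0 hb1 (Fin.last n) q hlab.symm hq
    exact absurd this (not_lt.mpr (Fin.le_last q))
  have hlam2 : lam' = lam.set i0 j0 := by
    rw [hlam', hrow0]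
    norm_num
  have hlen' : lam'.length = lam.length := by
    rw [hlam2, List.length_set]
  have hshift : ∀ a b, baseLabel lam a b = baseLabel lam' a b + (if j0 < b then 1 else 0) +
      (if a ≤ i0 ∧ b = j0 then 1 else 0) := by
    intro a b
    rw [hlam2]
    exact baseLabel_shift hbox.1 hrow0 a b
  have hgd' : ∀ a, lam'.getD a 0 = if a = i0 then j0 else lam.getD a 0 := by
    intro a
    rw [hlam2]
    by_cases h : a = i0
    · subst h; rw [if_pos rfl]; exact getD_set_eq' _ _ hbox.1 _
    · rw [if_neg h]; exact getD_set_ne' _ _ _ (Ne.symm h) _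
  have hboxup : ∀ a b, IsBox lam' a b → IsBox lam a b := by
    intro a b h
    have h2 := h.2
    rw [hgd' a] at h2
    refine ⟨hlen' ▸ h.1, ?_⟩
    by_cases ha : a = i0
    · subst ha
      rw [hrow0]
      rw [if_pos rfl] at h2
      omega
    · rwa [if_neg ha] at h2
  have hboxdown : ∀ a b, IsBox lam a b → ¬(a = i0 ∧ b = j0) → IsBox lam' a b := by
    intro a b h hne
    refine ⟨hlen'.symm ▸ h.1, ?_⟩
    rw [hgd' a]
    by_cases ha : a = i0
    · rw [if_pos ha]
      subst ha
      have hb2 := h.2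
      rw [hrow0] at hb2
      have hbne : b ≠ j0 := fun hb => hne ⟨rfl, hb⟩
      omega
    · rw [if_neg ha]; exact h.2
  have hsum' : lam'.sum = n := by
    have h1 : ∀ i' ∈ Finset.range lam.length,
        lam.getD i' 0 = lam'.getD i' 0 + (if i' = i0 then 1 else 0) := by
      intro i' _
      rw [hgd' i']
      by_cases h : i' = i0
      · subst h; rw [if_pos rfl, if_pos rfl, hrow0]
      · rw [if_neg h, if_neg h]
        omega
    have h2 : lam.sum = lam'.sum + 1 := by
      rw [sum_eq_range_getD lam, sum_eq_range_getD lam', hlen',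
        Finset.sum_congr rfl h1, Finset.sum_add_distrib, Finset.sum_ite_eq',
        if_pos (Finset.mem_range.mpr hbox.1)]
    omega
  -- the key correspondence between entries of R(y) and R(w)
  have key : ∀ a b : ℕ, IsBox lam' a b → ∀ p q : Fin (n+1),
      (y p : ℕ) + 1 = baseLabel lam' a b → (w q : ℕ) + 1 = baseLabel lam a b → p = q := by
    intro a b hb' p q hp hq
    have hbL : IsBox lam a b := hboxup a b hb'
    have hsh := hshift a b
    by_cases hcb : j0 < b ∨ (b = j0 ∧ a < i0)
    · have hgt : baseLabel lam i0 j0 < baseLabel lam a b := label_gt hbox hbL hcb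
      have hsh1 : baseLabel lam a b = baseLabel lam' a b + 1 := by
        split_ifs at hsh <;> omega
      have hwq : (w (Fin.last n) : ℕ) < (w q : ℕ) := by
        rw [hlab] at hgt
        omega
      have hyq := hygt q hwq
      apply y.injective
      apply Fin.ext
      omega
    · have hca : b < j0 ∨ (b = j0 ∧ i0 < a) := by
        have h2 := hb'.2
        rw [hgd' a] at h2
        by_cases ha : a = i0
        · rw [if_pos ha] at h2
          omega
        · rw [if_neg ha] at h2
          omega
      have hlt : baseLabel lam a b < baseLabel lam i0 j0 := label_lt hbox hbL hca
      have hsh0 : baseLabel lam a b = baseLabel lam' a b := by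
        split_ifs at hsh <;> omega
      have hwq : (w q : ℕ) < (w (Fin.last n) : ℕ) := by
        rw [hlab] at hlt
        omega
      have hyq := hylt q hwq
      apply y.injective
      apply Fin.ext
      omega
  refine ⟨hylast, ?_, key, ?_⟩
  · -- row-strictness of R(y)
    intro a b hb1 p q hp hq
    have hb1L : IsBox lam a (b+1) := hboxup _ _ hb1
    have hb0' : IsBox lam' a b := ⟨hb1.1, by have := hb1.2; omega⟩
    have hb0L : IsBox lam a b := ⟨hb1L.1, by have := hb1L.2; omega⟩
    obtain ⟨p', hp'⟩ := entry (baseLabel lam a b) (baseLabel_pos hb0L)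
      (by have := baseLabel_le_sum lam a b; omega)
    obtain ⟨q', hq'⟩ := entry (baseLabel lam a (b+1)) (baseLabel_pos hb1L)
      (by have := baseLabel_le_sum lam a (b+1); omega)
    have hpq := hrs a b hb1L p' q' hp' hq'
    rwa [key a b hb0' p p' hp hp', key a (b+1) hb1 q q' hq hq']
  · -- the inversion sets
    intro k ℓ
    simp only [SpringerInvT, HessInvT]
    constructor
    · rintro ⟨hlk, ik, jk, il, jl, hbk, hbl, hLk, hLl, hpos, hnb⟩
      have hbkL := hboxup _ _ hbk
      have hblL := hboxup _ _ hbl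
      obtain ⟨k', hk'⟩ := entry (baseLabel lam ik jk) (baseLabel_pos hbkL)
        (by have := baseLabel_le_sum lam ik jk; omega)
      have hkk : k = k' := key ik jk hbk k k' hLk.symm hk'
      obtain ⟨l', hl'⟩ := entry (baseLabel lam il jl) (baseLabel_pos hblL)
        (by have := baseLabel_le_sum lam il jl; omega)
      have hll : ℓ = l' := key il jl hbl ℓ l' hLl.symm hl'
      have hklast : k ≠ Fin.last n := by
        intro hk
        have hle : baseLabel lam' ik jk ≤ lam'.sum := baseLabel_le_sum lam' ik jk
        rw [hsum'] at hle
        rw [hk, hylast] at hLk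
        simp only [Fin.val_last] at hLk
        omega
      have hkn : (k : ℕ) < n := by
        have h1 : (k : ℕ) ≠ n := fun hc => hklast (Fin.ext (by simpa using hc))
        have := k.isLt
        omega
      refine ⟨⟨hlk, ik, jk, il, jl, hbkL, hblL, ?_, ?_, hpos, ?_⟩, hklast⟩
      · rw [← hkk] at hk'
        omega
      · rw [← hll] at hl'
        omega
      · intro r hbr hr
        show (k:ℕ) + 1 ≤ (r:ℕ) + 1 - 1
        by_cases hdel : il = i0 ∧ jl + 1 = j0
        · have hrw : (w r : ℕ) + 1 = baseLabel lam i0 j0 := by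
            rw [← hdel.1, ← hdel.2]
            exact hr
          have hrv : (w r : ℕ) = (w (Fin.last n) : ℕ) := by
            rw [hlab] at hrw
            omega
          have hrl : r = Fin.last n := w.injective (Fin.ext hrv)
          rw [hrl]
          simp only [Fin.val_last]
          omega
        · have hbr' : IsBox lam' il (jl+1) := hboxdown _ _ hbr hdel
          obtain ⟨r', hr2⟩ := entry' (baseLabel lam' il (jl+1)) (baseLabel_pos hbr')
            (by have := baseLabel_le_sum lam' il (jl+1); omega)
          have hre : r' = r := key il (jl+1) hbr' r' r hr2 hr
          have hcond : (k:ℕ) + 1 ≤ (r':ℕ) + 1 - 1 := hnb r' hbr' hr2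
          rw [hre] at hcond
          exact hcond
    · rintro ⟨⟨hlk, ik, jk, il, jl, hbkL, hblL, hLk, hLl, hpos, hnb⟩, hklast⟩
      have hllast : ℓ ≠ Fin.last n := by
        intro hl
        rw [hl] at hlk
        exact absurd hlk (not_lt.mpr (Fin.le_last k))
      have hkne : ¬(ik = i0 ∧ jk = j0) := by
        rintro ⟨rfl, rfl⟩
        rw [hlab] at hLk
        exact hklast (w.injective (Fin.ext (by omega)))
      have hlne : ¬(il = i0 ∧ jl = j0) := by
        rintro ⟨rfl, rfl⟩
        rw [hlab] at hLl
        exact hllast (w.injective (Fin.ext (by omega)))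
      have hbk' := hboxdown _ _ hbkL hkne
      have hbl' := hboxdown _ _ hblL hlne
      obtain ⟨pk, hpk⟩ := entry' (baseLabel lam' ik jk) (baseLabel_pos hbk')
        (by have := baseLabel_le_sum lam' ik jk; omega)
      have hpkk : pk = k := key ik jk hbk' pk k hpk hLk.symm
      obtain ⟨pl, hpl⟩ := entry' (baseLabel lam' il jl) (baseLabel_pos hbl')
        (by have := baseLabel_le_sum lam' il jl; omega)
      have hpll : pl = ℓ := key il jl hbl' pl ℓ hpl hLl.symm
      refine ⟨hlk, ik, jk, il, jl, hbk', hbl', ?_, ?_, hpos, ?_⟩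
      · rw [← hpkk]
        omega
      · rw [← hpll]
        omega
      · intro r hbr' hr
        show (k:ℕ) + 1 ≤ (r:ℕ) + 1 - 1
        have hbrL := hboxup _ _ hbr'
        obtain ⟨r2, hr2⟩ := entry (baseLabel lam il (jl+1)) (baseLabel_pos hbrL)
          (by have := baseLabel_le_sum lam il (jl+1); omega)
        have hre : r = r2 := key il (jl+1) hbr' r r2 hr hr2
        have hcond : (k:ℕ) + 1 ≤ (r2:ℕ) + 1 - 1 := hnb r2 hbrL hr2
        rw [hre]
        exact hcond
end
end

section
/- Let λ be a weak composition of n, w ∈ S_n with R(w) row-strict, 2 ≤ k ≤ n, and g_k ∈ B_k(w). Then g_k fixes e_{w(j)} for all j ≥ k, preserves the subspace span{e_{w(1)},…,e_{w(k)}}, and maps ker(X_λ) into ker(X_λ). -/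
open Matrix

attribute [local instance] Classical.propDecidable

noncomputable section

lemma IsBox_left {lam : List ℕ} {i j : ℕ} (h : IsBox lam i (j+1)) : IsBox lam i j :=
  ⟨h.1, by have := h.2; omega⟩

lemma sumMin_succ (lam : List ℕ) (j : ℕ) :
    (∑ i' ∈ Finset.range lam.length, min (lam.getD i' 0) (j+1)) =
    (∑ i' ∈ Finset.range lam.length, min (lam.getD i' 0) j)
      + ((Finset.Ico 0 lam.length).filter (fun i' => j < lam.getD i' 0)).card := by
  rw [Finset.card_filter, Nat.Ico_zero_eq_range, ← Finset.sum_add_distrib]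
  apply Finset.sum_congr rfl
  intro i _
  split <;> omega

lemma sumMin_mono (lam : List ℕ) {j j' : ℕ} (h : j ≤ j') :
    (∑ i' ∈ Finset.range lam.length, min (lam.getD i' 0) j) ≤
    (∑ i' ∈ Finset.range lam.length, min (lam.getD i' 0) j') :=
  Finset.sum_le_sum fun i _ => min_le_min le_rfl h

lemma label_pos {lam : List ℕ} {i j : ℕ} (h : IsBox lam i j) :
    (∑ i' ∈ Finset.range lam.length, min (lam.getD i' 0) j) < baseLabel lam i j := by
  have : i ∈ (Finset.Ico i lam.length).filter (fun i' => j < lam.getD i' 0) := by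
    exact Finset.mem_filter.mpr ⟨Finset.mem_Ico.mpr ⟨le_rfl, h.1⟩, h.2⟩
  have := Finset.card_pos.mpr ⟨i, this⟩
  unfold baseLabel; omega

lemma label_le_succ {lam : List ℕ} (i j : ℕ) :
    baseLabel lam i j ≤ (∑ i' ∈ Finset.range lam.length, min (lam.getD i' 0) (j+1)) := by
  rw [sumMin_succ]
  unfold baseLabel
  have : ((Finset.Ico i lam.length).filter (fun i' => j < lam.getD i' 0)).card ≤
      ((Finset.Ico 0 lam.length).filter (fun i' => j < lam.getD i' 0)).card :=
    Finset.card_le_card (Finset.filter_subset_filter _ (Finset.Ico_subset_Ico (Nat.zero_le i) le_rfl))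
  omega

lemma sum_getD (lam : List ℕ) :
    (∑ i' ∈ Finset.range lam.length, lam.getD i' 0) = lam.sum := by
  induction lam with
  | nil => simp
  | cons a l ih =>
    rw [List.length_cons, Finset.sum_range_succ', List.sum_cons]
    simp only [List.getD_cons_succ, List.getD_cons_zero]
    rw [ih]; ring

lemma label_le {lam : List ℕ} {i j : ℕ} (h : IsBox lam i j) :
    baseLabel lam i j ≤ lam.sum := by
  calc baseLabel lam i j ≤ _ := label_le_succ i j
    _ ≤ ∑ i' ∈ Finset.range lam.length, lam.getD i' 0 :=
        Finset.sum_le_sum fun i _ => min_le_left _ _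
    _ = lam.sum := sum_getD lam

lemma label_lt_of_col_lt {lam : List ℕ} {i j i' j' : ℕ} (h : IsBox lam i j)
    (h' : IsBox lam i' j') (hj : j < j') : baseLabel lam i j < baseLabel lam i' j' := by
  calc baseLabel lam i j ≤ _ := label_le_succ i j
    _ ≤ (∑ i'' ∈ Finset.range lam.length, min (lam.getD i'' 0) j') := sumMin_mono lam hj
    _ < baseLabel lam i' j' := label_pos h'

lemma label_inj {lam : List ℕ} {i j i' j' : ℕ} (h : IsBox lam i j) (h' : IsBox lam i' j')
    (he : baseLabel lam i j = baseLabel lam i' j') : i = i' ∧ j = j' := by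
  have hj : j = j' := by
    rcases lt_trichotomy j j' with hlt | he' | hgt
    · exact absurd he (Nat.ne_of_lt (label_lt_of_col_lt h h' hlt))
    · exact he'
    · exact absurd he.symm (Nat.ne_of_lt (label_lt_of_col_lt h' h hgt))
  subst hj
  refine ⟨?_, rfl⟩
  by_contra hii
  -- wlog-style: show card strictly decreases in i
  have key : ∀ a b : ℕ, a < b → IsBox lam a j →
      ((Finset.Ico b lam.length).filter (fun i'' => j < lam.getD i'' 0)).card <
      ((Finset.Ico a lam.length).filter (fun i'' => j < lam.getD i'' 0)).card := by
    intro a b hab hbox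
    apply Finset.card_lt_card
    constructor
    · exact Finset.filter_subset_filter _ (Finset.Ico_subset_Ico (Nat.le_of_lt hab) le_rfl)
    · intro hsub
      have ha : a ∈ (Finset.Ico a lam.length).filter (fun i'' => j < lam.getD i'' 0) := by
        exact Finset.mem_filter.mpr ⟨Finset.mem_Ico.mpr ⟨le_rfl, hbox.1⟩, hbox.2⟩
      have := Finset.mem_Ico.mp (Finset.mem_filter.mp (hsub ha)).1
      omega
  unfold baseLabel at he
  rcases Nat.lt_or_ge i i' with hlt | hge
  · have := key i i' hlt h; omega
  · have hgt : i' < i := by omega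
    have := key i' i hgt h'; omega

lemma label_pos' {lam : List ℕ} {i j : ℕ} (h : IsBox lam i j) :
    1 ≤ baseLabel lam i j := by
  have := label_pos h
  omega


lemma Xne {n : ℕ} {lam : List ℕ} {a b : Fin n} (h : Xlam n lam a b ≠ 0) :
    ∃ i j, IsBox lam i (j+1) ∧ baseLabel lam i j = (a : ℕ) + 1 ∧
      baseLabel lam i (j+1) = (b : ℕ) + 1 := by
  by_contra hc
  exact h (if_neg hc)

lemma Xeq {n : ℕ} {lam : List ℕ} {a b : Fin n}
    (h : ∃ i j, IsBox lam i (j+1) ∧ baseLabel lam i j = (a : ℕ) + 1 ∧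
      baseLabel lam i (j+1) = (b : ℕ) + 1) : Xlam n lam a b = 1 :=
  if_pos h

lemma mul_entry_ne {n : ℕ} {A B : Matrix (Fin n) (Fin n) ℂ} {a c : Fin n}
    (h : (A * B) a c ≠ 0) : ∃ b, A a b ≠ 0 ∧ B b c ≠ 0 := by
  by_contra hc
  push_neg at hc
  apply h
  rw [Matrix.mul_apply]
  apply Finset.sum_eq_zero
  intro b _
  by_cases hA : A a b = 0
  · rw [hA, zero_mul]
  · rw [hc b hA, mul_zero]

lemma pathLe {n : ℕ} {lam : List ℕ} {w : Equiv.Perm (Fin n)} (hrs : RowStrictT n lam w) :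
    ∀ (m : ℕ) (p q : Fin n), ((Xlam n lam) ^ m) (w p) (w q) ≠ 0 →
      p ≤ q ∧ (m ≠ 0 → p < q) := by
  intro m
  induction m with
  | zero =>
    intro p q h
    rw [pow_zero] at h
    have : w p = w q := by
      by_contra hne
      exact h (Matrix.one_apply_ne hne)
    exact ⟨le_of_eq (w.injective this), fun h0 => absurd rfl h0⟩
  | succ m ih =>
    intro p q h
    rw [pow_succ] at h
    obtain ⟨c, h1, h2⟩ := mul_entry_ne h
    set r := w.symm c with hr
    have hc : c = w r := (w.apply_symm_apply c).symm
    rw [hc] at h1 h2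
    obtain ⟨i, j, hbox, hL1, hL2⟩ := Xne h2
    have hrq : r < q := hrs i j hbox r q hL1.symm hL2.symm
    have := (ih p r h1).1
    exact ⟨le_of_lt (lt_of_le_of_lt this hrq), fun _ => lt_of_le_of_lt this hrq⟩

lemma chainBox {n : ℕ} {lam : List ℕ} :
    ∀ (m : ℕ) (b c : Fin n) (i j : ℕ), ((Xlam n lam) ^ m) b c ≠ 0 →
      IsBox lam i j → baseLabel lam i j = (c : ℕ) + 1 →
      m ≤ j ∧ IsBox lam i (j - m) ∧ baseLabel lam i (j - m) = (b : ℕ) + 1 := by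
  intro m
  induction m with
  | zero =>
    intro b c i j h hbox hL
    rw [pow_zero] at h
    have : b = c := by
      by_contra hne
      exact h (Matrix.one_apply_ne hne)
    subst this
    exact ⟨Nat.zero_le j, by simpa using hbox, by simpa using hL⟩
  | succ m ih =>
    intro b c i j h hbox hL
    rw [pow_succ] at h
    obtain ⟨c', h1, h2⟩ := mul_entry_ne h
    obtain ⟨i2, j2, hbox2, hL1, hL2⟩ := Xne h2
    obtain ⟨hi, hj⟩ := label_inj hbox hbox2 (hL.trans hL2.symm)
    subst hi
    subst hj
    obtain ⟨hm, hbox3, hL3⟩ := ih b c' i j2 h1 (IsBox_left hbox2) hL1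
    have heq : j2 + 1 - (m + 1) = j2 - m := by omega
    rw [heq]
    exact ⟨by omega, hbox3, hL3⟩

lemma rowMono {n : ℕ} {lam : List ℕ} {w : Equiv.Perm (Fin n)} (hn : lam.sum = n)
    (hrs : RowStrictT n lam w) :
    ∀ (d i j : ℕ), 1 ≤ d → IsBox lam i (j + d) → ∀ p q : Fin n,
      baseLabel lam i j = (w p : ℕ) + 1 → baseLabel lam i (j + d) = (w q : ℕ) + 1 → p < q := by
  intro d
  induction d with
  | zero => intro i j h; omega
  | succ d ih =>
    intro i j _ hbox p q hL1 hL2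
    rcases Nat.eq_zero_or_pos d with hd | hd
    · subst hd
      exact hrs i j (by simpa using hbox) p q hL1.symm (by rw [← hL2])
    · have hbox' : IsBox lam i (j + d) := IsBox_left (show IsBox lam i (j+d+1) from hbox)
      set t := baseLabel lam i (j + d) with ht
      have h1t : 1 ≤ t := label_pos' hbox'
      have htn : t ≤ n := hn ▸ label_le hbox'
      set rf : Fin n := ⟨t - 1, by omega⟩ with hrf
      set r : Fin n := w.symm rf with hrdef
      have hwr : (w r : ℕ) + 1 = t := by
        rw [hrdef, w.apply_symm_apply]; simp [hrf]; omega
      have hpr : p < r := ih i j hd hbox' p r hL1 hwr.symm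
      have hrq : r < q := hrs i (j + d) (show IsBox lam i (j+d+1) from hbox) r q
        (by rw [hwr]) (show (w q : ℕ) + 1 = baseLabel lam i (j+d+1) from hL2.symm)
      exact lt_trans hpr hrq

lemma keyZero {n : ℕ} {lam : List ℕ} {w : Equiv.Perm (Fin n)} (hn : lam.sum = n)
    (hrs : RowStrictT n lam w) {k ℓ : Fin n} (hS : SpringerInvT n lam w k ℓ)
    (m m' : ℕ) (b : Fin n) (hk : ((Xlam n lam) ^ m) b (w k) ≠ 0)
    (hl : ((Xlam n lam) ^ m') b (w ℓ) ≠ 0) : False := by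
  obtain ⟨hlk, ik, jk, il, jl, hboxk, hboxl, hLk, hLl, hdisj, -⟩ := hS
  rcases Nat.eq_zero_or_pos m with hm | hm
  · subst hm
    rw [pow_zero] at hk
    have hbk : b = w k := by
      by_contra hne
      exact hk (Matrix.one_apply_ne hne)
    subst hbk
    have := (pathLe hrs m' k ℓ hl).1
    exact absurd hlk (not_lt.mpr this)
  · obtain ⟨hm1, hbox1, hL1⟩ := chainBox m b (w k) ik jk hk hboxk hLk
    obtain ⟨hm2, hbox2, hL2⟩ := chainBox m' b (w ℓ) il jl hl hboxl hLl
    obtain ⟨hi, -⟩ := label_inj hbox1 hbox2 (hL1.trans hL2.symm)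
    rcases hdisj with hjj | ⟨hjj, hil⟩
    · -- same row ik = il, jk < jl ⇒ k < ℓ, contradiction
      have hb : IsBox lam ik (jk + (jl - jk)) := by
        have : jk + (jl - jk) = jl := by omega
        rw [this, hi]; exact hboxl
      have : k < ℓ := rowMono hn hrs (jl - jk) ik jk (by omega) hb k ℓ hLk
        (by rw [show jk + (jl - jk) = jl from by omega, hi]; exact hLl)
      exact absurd hlk (not_lt.mpr (le_of_lt this))
    · omega

lemma ker_supp {n : ℕ} {lam : List ℕ} (hn : lam.sum = n) {v : Fin n → ℂ}
    (hv : (Xlam n lam).mulVec v = 0) {b : Fin n} (hb : v b ≠ 0)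
    {i j : ℕ} (hbox : IsBox lam i j) (hL : baseLabel lam i j = (b : ℕ) + 1) : j = 0 := by
  by_contra hj
  obtain ⟨j', rfl⟩ : ∃ j', j = j' + 1 := ⟨j - 1, by omega⟩
  have hbox' : IsBox lam i j' := IsBox_left hbox
  have h1t : 1 ≤ baseLabel lam i j' := label_pos' hbox'
  have htn : baseLabel lam i j' ≤ n := hn ▸ label_le hbox'
  set a : Fin n := ⟨baseLabel lam i j' - 1, by omega⟩ with ha
  have hLa : baseLabel lam i j' = (a : ℕ) + 1 := by simp [ha]; omega
  have hXa : Xlam n lam a b = 1 := Xeq ⟨i, j', hbox, hLa, hL⟩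
  have h0 : (Xlam n lam).mulVec v a = 0 := by rw [hv]; rfl
  have hsum : (Xlam n lam).mulVec v a = Xlam n lam a b * v b := by
    rw [Matrix.mulVec, dotProduct]
    apply Finset.sum_eq_single b
    · intro b' _ hne
      have hzero : Xlam n lam a b' = 0 := by
        by_contra hx
        obtain ⟨i2, j2, hbox2, hL1, hL2⟩ := Xne hx
        obtain ⟨hi, hj⟩ := label_inj (IsBox_left hbox2) hbox' (hL1.trans hLa.symm)
        subst hi; subst hj
        have : (b' : ℕ) = (b : ℕ) := by rw [hL] at hL2; omega
        exact hne (Fin.ext this)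
      rw [hzero, zero_mul]
    · intro habs
      exact absurd (Finset.mem_univ b) habs
  rw [hsum, hXa, one_mul] at h0
  exact hb h0

lemma stdMulVec {n : ℕ} (i j : Fin n) (u : Fin n → ℂ) :
    (Matrix.single i j (1 : ℂ)).mulVec u = u j • (Pi.single i (1 : ℂ) : Fin n → ℂ) := by
  ext a
  simp only [Matrix.mulVec, dotProduct, Matrix.single, Pi.smul_apply,
    Pi.single_apply, smul_eq_mul, Matrix.of_apply]
  by_cases h : a = i
  · subst h
    simp [Finset.sum_ite_eq]
  · rw [if_neg h, mul_zero]
    apply Finset.sum_eq_zero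
    intro b _
    rw [if_neg (by tauto), zero_mul]

lemma termVec {n : ℕ} (X : Matrix (Fin n) (Fin n) ℂ) (m : ℕ) (a c : Fin n) (v : Fin n → ℂ) :
    (X ^ m * Matrix.single a c (1 : ℂ) * (Xᵀ) ^ m).mulVec v =
      (∑ b, (X ^ m) b c * v b) • (X ^ m).mulVec (Pi.single a (1 : ℂ)) := by
  rw [← Matrix.mulVec_mulVec, ← Matrix.mulVec_mulVec, stdMulVec]
  have h1 : ((Xᵀ) ^ m).mulVec v c = ∑ b, (X ^ m) b c * v b := by
    rw [← Matrix.transpose_pow]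
    simp [Matrix.mulVec, dotProduct, Matrix.transpose_apply]
  rw [h1, Matrix.mulVec_smul]

lemma mulVec_sum {n : ℕ} (A : Matrix (Fin n) (Fin n) ℂ) {ι : Type*} (s : Finset ι)
    (f : ι → Fin n → ℂ) : A.mulVec (∑ i ∈ s, f i) = ∑ i ∈ s, A.mulVec (f i) := by
  ext a
  simp only [Matrix.mulVec, dotProduct, Finset.sum_apply, Finset.mul_sum]
  rw [Finset.sum_comm]

lemma sum_mulVec' {n : ℕ} {ι : Type*} (s : Finset ι) (f : ι → Matrix (Fin n) (Fin n) ℂ)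
    (v : Fin n → ℂ) : (∑ i ∈ s, f i).mulVec v = ∑ i ∈ s, (f i).mulVec v := by
  ext a
  simp only [Matrix.mulVec, dotProduct, Finset.sum_apply, Matrix.sum_apply, Finset.sum_mul]
  rw [Finset.sum_comm]


/-- each `g_k ∈ B_k(w)` fixes `e_{w(j)}` for `j ≥ k`, preserves
`span{e_{w(1)},…,e_{w(k)}}`, and maps `ker X_λ` into `ker X_λ`. -/
theorem stmt11 (n : ℕ) (lam : List ℕ) (hn : lam.sum = n)
    (w : Equiv.Perm (Fin n)) (hrs : RowStrictT n lam w)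
    (k : Fin n) (hk : 1 ≤ (k : ℕ))
    (x : Fin n → ℂ) (hx : ∀ ℓ, ¬ SpringerInvT n lam w k ℓ → x ℓ = 0) :
    (∀ j : Fin n, k ≤ j →
      (BkMat n lam w k x).mulVec (Pi.single (w j) 1) = Pi.single (w j) 1) ∧
    (Submodule.map (BkMat n lam w k x).mulVecLin
        (Submodule.span ℂ {v | ∃ j : Fin n, j ≤ k ∧ v = Pi.single (w j) (1 : ℂ)}) =
      Submodule.span ℂ {v | ∃ j : Fin n, j ≤ k ∧ v = Pi.single (w j) (1 : ℂ)}) ∧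
    (∀ v ∈ LinearMap.ker (Xlam n lam).mulVecLin,
      (BkMat n lam w k x).mulVec v ∈ LinearMap.ker (Xlam n lam).mulVecLin) := by
  classical
  set X := Xlam n lam with hXdef
  set N := ∑ ℓ : Fin n, if SpringerInvT n lam w k ℓ then
      x ℓ • (∑ m ∈ Finset.range n,
        X ^ m * Matrix.single (w k) (w ℓ) (1 : ℂ) * (Xᵀ) ^ m)
    else 0 with hNdef
  have hB : BkMat n lam w k x = 1 + N := rfl
  have hNmul : ∀ v : Fin n → ℂ, N.mulVec v = ∑ ℓ : Fin n, if SpringerInvT n lam w k ℓ then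
      x ℓ • ∑ m ∈ Finset.range n,
        (∑ b, (X ^ m) b (w ℓ) * v b) • (X ^ m).mulVec (Pi.single (w k) (1:ℂ))
    else 0 := by
    intro v
    rw [hNdef, sum_mulVec']
    apply Finset.sum_congr rfl
    intro ℓ _
    split
    · rw [smul_mulVec, sum_mulVec']
      congr 1
      apply Finset.sum_congr rfl
      intro m _
      exact termVec X m (w k) (w ℓ) v
    · exact Matrix.zero_mulVec v
  have hscal : ∀ (m : ℕ) (c : Fin n) (a : Fin n),
      (∑ b, (X ^ m) b c * (Pi.single a (1:ℂ) : Fin n → ℂ) b) = (X ^ m) a c := by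
    intro m c a
    rw [Finset.sum_eq_single a]
    · simp
    · intro b _ hne
      simp [Pi.single_apply, hne]
    · intro h
      exact absurd (Finset.mem_univ a) h
  have hfix : ∀ j : Fin n, k ≤ j → N.mulVec (Pi.single (w j) (1:ℂ)) = 0 := by
    intro j hj
    rw [hNmul]
    apply Finset.sum_eq_zero
    intro ℓ _
    split
    case isTrue hS =>
      have hzero : ∀ m ∈ Finset.range n,
          (∑ b, (X ^ m) b (w ℓ) * (Pi.single (w j) (1:ℂ) : Fin n → ℂ) b) •
            (X ^ m).mulVec (Pi.single (w k) (1:ℂ)) = 0 := by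
        intro m _
        rw [hscal]
        have hz : (X ^ m) (w j) (w ℓ) = 0 := by
          by_contra h
          have h1 := (pathLe hrs m j ℓ h).1
          exact absurd h1 (not_le.mpr (lt_of_lt_of_le hS.1 hj))
        rw [hz, zero_smul]
      rw [Finset.sum_eq_zero hzero, smul_zero]
    case isFalse h => rfl
  have part1 : ∀ j : Fin n, k ≤ j →
      (BkMat n lam w k x).mulVec (Pi.single (w j) 1) = Pi.single (w j) 1 := by
    intro j hj
    rw [hB, Matrix.add_mulVec, Matrix.one_mulVec, hfix j hj, add_zero]
  set S := Submodule.span ℂ {v : Fin n → ℂ | ∃ j : Fin n, j ≤ k ∧ v = Pi.single (w j) (1 : ℂ)}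
    with hSdef
  have hW : ∀ m : ℕ, (X ^ m).mulVec (Pi.single (w k) (1:ℂ)) ∈ S := by
    intro m
    have hexp : (X ^ m).mulVec (Pi.single (w k) (1:ℂ)) =
        ∑ a : Fin n, ((X ^ m) a (w k)) • (Pi.single a (1:ℂ) : Fin n → ℂ) := by
      ext a'
      simp [Matrix.mulVec_single, Finset.sum_apply, Pi.single_apply, mul_ite, mul_one,
        mul_zero, Finset.sum_ite_eq]
    rw [hexp]
    apply Submodule.sum_mem
    intro a _
    by_cases hz : (X ^ m) a (w k) = 0
    · rw [hz, zero_smul]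
      exact Submodule.zero_mem S
    · apply Submodule.smul_mem
      apply Submodule.subset_span
      refine ⟨w.symm a, ?_, by rw [w.apply_symm_apply]⟩
      have hne : (X ^ m) (w (w.symm a)) (w k) ≠ 0 := by
        rw [w.apply_symm_apply]; exact hz
      exact (pathLe hrs m (w.symm a) k hne).1
  have hNS : ∀ v : Fin n → ℂ, N.mulVec v ∈ S := by
    intro v
    rw [hNmul]
    apply Submodule.sum_mem
    intro ℓ _
    split
    · apply Submodule.smul_mem
      apply Submodule.sum_mem
      intro m _
      exact Submodule.smul_mem S _ (hW m)
    · exact Submodule.zero_mem S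
  have hNk : ∀ m0 : ℕ, N.mulVec ((X ^ m0).mulVec (Pi.single (w k) (1:ℂ))) = 0 := by
    intro m0
    rw [hNmul]
    apply Finset.sum_eq_zero
    intro ℓ _
    split
    case isTrue hS =>
      have hzero : ∀ m ∈ Finset.range n,
          (∑ b, (X ^ m) b (w ℓ) * ((X ^ m0).mulVec (Pi.single (w k) (1:ℂ))) b) •
            (X ^ m).mulVec (Pi.single (w k) (1:ℂ)) = 0 := by
        intro m _
        have hz : (∑ b, (X ^ m) b (w ℓ) * ((X ^ m0).mulVec (Pi.single (w k) (1:ℂ))) b) = 0 := by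
          apply Finset.sum_eq_zero
          intro b _
          have hval : ((X ^ m0).mulVec (Pi.single (w k) (1:ℂ))) b = (X ^ m0) b (w k) := by
            simp [Matrix.mulVec_single]
          rw [hval]
          by_cases h1 : (X ^ m) b (w ℓ) = 0
          · rw [h1, zero_mul]
          · by_cases h2 : (X ^ m0) b (w k) = 0
            · rw [h2, mul_zero]
            · exact (keyZero hn hrs hS m0 m b h2 h1).elim
        rw [hz, zero_smul]
      rw [Finset.sum_eq_zero hzero, smul_zero]
    case isFalse h => rfl
  have hNN : ∀ v : Fin n → ℂ, N.mulVec (N.mulVec v) = 0 := by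
    intro v
    rw [hNmul v, _root_.mulVec_sum]
    apply Finset.sum_eq_zero
    intro ℓ _
    split
    · rw [Matrix.mulVec_smul, _root_.mulVec_sum]
      have hz : ∀ m ∈ Finset.range n, N.mulVec
          ((∑ b, (X ^ m) b (w ℓ) * v b) • (X ^ m).mulVec (Pi.single (w k) (1:ℂ))) = 0 := by
        intro m _
        rw [Matrix.mulVec_smul, hNk m, smul_zero]
      rw [Finset.sum_eq_zero hz, smul_zero]
    · exact Matrix.mulVec_zero N
  have part2 : Submodule.map (BkMat n lam w k x).mulVecLin S = S := by
    apply le_antisymm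
    · rw [Submodule.map_le_iff_le_comap, hSdef, Submodule.span_le]
      intro v hv
      obtain ⟨j, hj, rfl⟩ := hv
      show (BkMat n lam w k x).mulVec (Pi.single (w j) (1:ℂ)) ∈ S
      rw [hB, Matrix.add_mulVec, Matrix.one_mulVec]
      exact Submodule.add_mem S (Submodule.subset_span ⟨j, hj, rfl⟩) (hNS _)
    · rw [hSdef, Submodule.span_le]
      intro v hv
      obtain ⟨j, hj, rfl⟩ := hv
      have hdS : N.mulVec (Pi.single (w j) (1:ℂ)) ∈ S := hNS _
      have hgen : (Pi.single (w j) (1:ℂ) : Fin n → ℂ) ∈ S :=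
        Submodule.subset_span ⟨j, hj, rfl⟩
      refine Submodule.mem_map.mpr
        ⟨Pi.single (w j) (1:ℂ) - N.mulVec (Pi.single (w j) (1:ℂ)),
          Submodule.sub_mem S hgen hdS, ?_⟩
      show (BkMat n lam w k x).mulVec
        (Pi.single (w j) (1:ℂ) - N.mulVec (Pi.single (w j) (1:ℂ))) = Pi.single (w j) (1:ℂ)
      rw [hB, Matrix.add_mulVec, Matrix.one_mulVec, Matrix.mulVec_sub, hNN]
      abel
  have part3 : ∀ v ∈ LinearMap.ker (Xlam n lam).mulVecLin,
      (BkMat n lam w k x).mulVec v ∈ LinearMap.ker (Xlam n lam).mulVecLin := by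
    intro v hv
    rw [LinearMap.mem_ker] at hv ⊢
    have hXv : X.mulVec v = 0 := hv
    show X.mulVec ((BkMat n lam w k x).mulVec v) = 0
    rw [hB, Matrix.add_mulVec, Matrix.one_mulVec, Matrix.mulVec_add, hXv, zero_add,
      hNmul, _root_.mulVec_sum]
    apply Finset.sum_eq_zero
    intro ℓ _
    split
    case isTrue hS =>
      rw [Matrix.mulVec_smul, _root_.mulVec_sum]
      have hz : ∀ m ∈ Finset.range n, X.mulVec
          ((∑ b, (X ^ m) b (w ℓ) * v b) • (X ^ m).mulVec (Pi.single (w k) (1:ℂ))) = 0 := by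
        intro m _
        rw [Matrix.mulVec_smul, Matrix.mulVec_mulVec, ← pow_succ']
        by_cases hc : (∑ b, (X ^ m) b (w ℓ) * v b) = 0
        · rw [hc, zero_smul]
        · obtain ⟨b, -, hb⟩ := Finset.exists_ne_zero_of_sum_ne_zero hc
          have h1 : (X ^ m) b (w ℓ) ≠ 0 := fun h => hb (by rw [h, zero_mul])
          have h2 : v b ≠ 0 := fun h => hb (by rw [h, mul_zero])
          obtain ⟨hlk, ik, jk, il, jl, hboxk, hboxl, hLk, hLl, hdisj, -⟩ := hS
          obtain ⟨hm2, hbox2, hL2⟩ := chainBox m b (w ℓ) il jl h1 hboxl hLl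
          have hjl : jl - m = 0 := ker_supp hn hXv h2 hbox2 hL2
          have hcol : ∀ a : Fin n, (X ^ (m+1)) a (w k) = 0 := by
            intro a
            by_contra hA
            obtain ⟨hm1, -, -⟩ := chainBox (m+1) a (w k) ik jk hA hboxk hLk
            rcases hdisj with h' | ⟨h', -⟩ <;> omega
          have hXsingle : (X ^ (m+1)).mulVec (Pi.single (w k) (1:ℂ)) = 0 := by
            ext a
            simp [Matrix.mulVec_single, hcol a]
          rw [hXsingle, smul_zero]
      rw [Finset.sum_eq_zero hz, smul_zero]
    case isFalse h => exact Matrix.mulVec_zero X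
  exact ⟨part1, part2, part3⟩
end
end

section
/- Let w ∈ S_n with R(w) row-strict, i = w(n), and w = vy the canonical factorization. Every element g_n ∈ B_n(w) can be factored uniquely as g_n = u_i · b_n, where u_i lies in the subgroup U_i of unipotent upper triangular matrices supported in row i (u ∈ U with u_{kj} = 0 for all k ≠ i with k < j), b_n ∈ vU_0v⁻¹ (with U_0 the unipotent upper triangular matrices in GL_{n−1} embedded in GL_n), and the i-th row of u_i equals the i-th row of g_n. -/
open Matrix

attribute [local instance] Classical.propDecidable

noncomputable section

namespace Aux

def Nsum (lam : List ℕ) (j : ℕ) : ℕ := ∑ i' ∈ Finset.range lam.length, min (lam.getD i' 0) j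

def Ccnt (lam : List ℕ) (i j : ℕ) : ℕ :=
  ((Finset.Ico i lam.length).filter (fun i' => j < lam.getD i' 0)).card

lemma baseLabel_eq (lam : List ℕ) (i j : ℕ) : baseLabel lam i j = Nsum lam j + Ccnt lam i j := rfl

lemma Nsum_succ (lam : List ℕ) (j : ℕ) : Nsum lam (j+1) = Nsum lam j + Ccnt lam 0 j := by
  unfold Nsum Ccnt
  rw [← Finset.range_eq_Ico, Finset.card_filter, ← Finset.sum_add_distrib]
  refine Finset.sum_congr rfl fun i' _ => ?_
  by_cases h : j < lam.getD i' 0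
  · rw [if_pos h, min_eq_right (Nat.succ_le_of_lt h), min_eq_right (le_of_lt h)]
  · rw [if_neg h, min_eq_left, min_eq_left] <;> omega

lemma Ccnt_le (lam : List ℕ) (i j : ℕ) : Ccnt lam i j ≤ Ccnt lam 0 j := by
  apply Finset.card_le_card
  exact Finset.filter_subset_filter _ (Finset.Ico_subset_Ico (Nat.zero_le _) le_rfl)

lemma Ccnt_pos (lam : List ℕ) {i j : ℕ} (h : IsBox lam i j) : 1 ≤ Ccnt lam i j := by
  rw [Nat.one_le_iff_ne_zero, ← Nat.pos_iff_ne_zero, Ccnt, Finset.card_pos]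
  exact ⟨i, Finset.mem_filter.2 ⟨Finset.mem_Ico.2 ⟨le_rfl, h.1⟩, h.2⟩⟩

lemma Nsum_mono (lam : List ℕ) {j j' : ℕ} (h : j ≤ j') : Nsum lam j ≤ Nsum lam j' := by
  exact Finset.sum_le_sum fun i' _ => min_le_min le_rfl h

lemma baseLabel_lt_col (lam : List ℕ) {i1 j1 i2 j2 : ℕ} (h2 : IsBox lam i2 j2) (hj : j1 < j2) :
    baseLabel lam i1 j1 < baseLabel lam i2 j2 := by
  rw [baseLabel_eq, baseLabel_eq]
  have h1 : Nsum lam j1 + Ccnt lam i1 j1 ≤ Nsum lam (j1+1) := by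
    rw [Nsum_succ]; exact Nat.add_le_add le_rfl (Ccnt_le lam i1 j1)
  have h2' := Ccnt_pos lam h2
  have h3 : Nsum lam (j1+1) ≤ Nsum lam j2 := Nsum_mono lam hj
  omega

lemma baseLabel_lt_row (lam : List ℕ) {i1 i2 j : ℕ} (h2 : IsBox lam i2 j) (hi : i2 < i1) :
    baseLabel lam i1 j < baseLabel lam i2 j := by
  rw [baseLabel_eq, baseLabel_eq]
  have : Ccnt lam i1 j < Ccnt lam i2 j := by
    apply Finset.card_lt_card
    rw [Finset.ssubset_iff_of_subset
      (Finset.filter_subset_filter _ (Finset.Ico_subset_Ico (le_of_lt hi) le_rfl))]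
    exact ⟨i2, Finset.mem_filter.2 ⟨Finset.mem_Ico.2 ⟨le_rfl, h2.1⟩, h2.2⟩,
      fun hmem => by
        have := (Finset.mem_Ico.1 (Finset.mem_filter.1 hmem).1).1; omega⟩
  omega

lemma baseLabel_pos (lam : List ℕ) {i j : ℕ} (h : IsBox lam i j) : 1 ≤ baseLabel lam i j := by
  rw [baseLabel_eq]; have := Ccnt_pos lam h; omega

lemma sum_getD (lam : List ℕ) : ∑ i' ∈ Finset.range lam.length, lam.getD i' 0 = lam.sum := by
  induction lam with
  | nil => simp
  | cons a l ih =>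
    rw [List.length_cons, Finset.sum_range_succ', List.sum_cons]
    simp only [List.getD_cons_succ, List.getD_cons_zero]
    rw [ih]; ring

lemma baseLabel_le_sum (lam : List ℕ) {i j : ℕ} (h : IsBox lam i j) :
    baseLabel lam i j ≤ lam.sum := by
  rw [baseLabel_eq]
  have h1 : Nsum lam j + Ccnt lam i j ≤ Nsum lam (j+1) := by
    rw [Nsum_succ]; exact Nat.add_le_add le_rfl (Ccnt_le lam i j)
  have h2 : Nsum lam (j+1) ≤ lam.sum := by
    rw [← sum_getD lam]
    exact Finset.sum_le_sum fun i' _ => min_le_left _ _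
  omega

lemma baseLabel_inj (lam : List ℕ) {i1 j1 i2 j2 : ℕ} (h1 : IsBox lam i1 j1) (h2 : IsBox lam i2 j2)
    (he : baseLabel lam i1 j1 = baseLabel lam i2 j2) : i1 = i2 ∧ j1 = j2 := by
  rcases Nat.lt_trichotomy j1 j2 with hj | hj | hj
  · have := baseLabel_lt_col lam (i1 := i1) h2 hj; omega
  · subst hj
    rcases Nat.lt_trichotomy i1 i2 with hi | hi | hi
    · have := baseLabel_lt_row lam h1 hi; omega
    · exact ⟨hi, rfl⟩
    · have := baseLabel_lt_row lam h2 hi; omega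
  · have := baseLabel_lt_col lam (i1 := i2) h1 hj; omega

end Aux

open Aux

section MainAux

lemma triple_apply {N : ℕ} (P Q : Matrix (Fin N) (Fin N) ℂ) (r s a b : Fin N) :
    (P * Matrix.single r s (1:ℂ) * Q) a b = P a r * Q s b := by
  rw [Matrix.mul_apply, Finset.sum_eq_single s]
  · rw [Matrix.mul_single_apply_same, mul_one]
  · intro c _ hc
    rw [Matrix.mul_single_apply_of_ne _ _ _ _ _ hc, zero_mul]
  · intro h; exact absurd (Finset.mem_univ s) h

lemma Xlam_supp {N : ℕ} {lam : List ℕ} {a b : Fin N} (h : Xlam N lam a b ≠ 0) :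
    ∃ i j, IsBox lam i (j+1) ∧ baseLabel lam i j = (a:ℕ)+1 ∧
      baseLabel lam i (j+1) = (b:ℕ)+1 := by
  by_cases hc : ∃ i j, IsBox lam i (j+1) ∧ baseLabel lam i j = (a:ℕ)+1 ∧
      baseLabel lam i (j+1) = (b:ℕ)+1
  · exact hc
  · exfalso; apply h; rw [Xlam]; exact if_neg hc

lemma Xpow_supp {N : ℕ} {lam : List ℕ} (m : ℕ) :
    ∀ a b : Fin N, ((Xlam N lam)^(m+1)) a b ≠ 0 →
      ∃ i j, IsBox lam i j ∧ IsBox lam i (j+(m+1)) ∧ baseLabel lam i j = (a:ℕ)+1 ∧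
        baseLabel lam i (j+(m+1)) = (b:ℕ)+1 := by
  induction m with
  | zero =>
    intro a b h
    rw [pow_one] at h
    obtain ⟨i, j, hb, h1, h2⟩ := Xlam_supp h
    exact ⟨i, j, ⟨hb.1, by have := hb.2; omega⟩, hb, h1, h2⟩
  | succ m ih =>
    intro a b h
    rw [pow_succ, Matrix.mul_apply] at h
    obtain ⟨c, _, hc⟩ := Finset.exists_ne_zero_of_sum_ne_zero h
    have h1 := left_ne_zero_of_mul hc
    have h2 := right_ne_zero_of_mul hc
    obtain ⟨i1, j1, b1, b1', l1, l1'⟩ := ih a c h1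
    obtain ⟨i2, j2, bb2, l2, l2'⟩ := Xlam_supp h2
    have b2l : IsBox lam i2 j2 := ⟨bb2.1, by have := bb2.2; omega⟩
    obtain ⟨hi, hj⟩ := Aux.baseLabel_inj lam b1' b2l (l1'.trans l2.symm)
    subst hi
    have hj2 : j2 = j1 + (m+1) := hj.symm
    subst hj2
    exact ⟨i1, j1, b1, bb2, l1, l2'⟩

variable {n : ℕ} {lam : List ℕ} {w : Equiv.Perm (Fin (n+1))}

lemma rowchain (hn : lam.sum = n+1) (hrs : RowStrictT (n+1) lam w) :
    ∀ (m i2 j2 : ℕ), IsBox lam i2 (j2+(m+1)) → ∀ p q : Fin (n+1),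
      (w p : ℕ)+1 = baseLabel lam i2 j2 → (w q : ℕ)+1 = baseLabel lam i2 (j2+(m+1)) →
        p < q := by
  intro m
  induction m with
  | zero => intro i2 j2 hb p q hp hq; exact hrs i2 j2 hb p q hp hq
  | succ m ih =>
    intro i2 j2 hb p q hp hq
    have hmid : IsBox lam i2 (j2+(m+1)) := ⟨hb.1, by have := hb.2; omega⟩
    have h1 := Aux.baseLabel_pos lam hmid
    have h2 := Aux.baseLabel_le_sum lam hmid
    rw [hn] at h2
    set q' : Fin (n+1) := w.symm ⟨baseLabel lam i2 (j2+(m+1)) - 1, by omega⟩ with hq'def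
    have hq' : (w q' : ℕ) + 1 = baseLabel lam i2 (j2+(m+1)) := by
      rw [hq'def, Equiv.apply_symm_apply]; simp; omega
    have hlt1 : p < q' := ih i2 j2 hmid p q' hp hq'
    have hlt2 : q' < q := hrs i2 (j2+(m+1)) hb q' q hq' hq
    exact lt_trans hlt1 hlt2

lemma springer_wlt {ℓ : Fin (n+1)} (hS : SpringerInvT (n+1) lam w (Fin.last n) ℓ) :
    (w (Fin.last n) : ℕ) < (w ℓ : ℕ) := by
  simp only [SpringerInvT, HessInvT] at hS
  obtain ⟨hlk, ik, jk, il, jl, bik, bil, labk, labl, hpos, hlast⟩ := hS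
  rcases hpos with hj | ⟨hj, hi⟩
  · have := Aux.baseLabel_lt_col lam (i1 := ik) bil hj; omega
  · subst hj
    have := Aux.baseLabel_lt_row lam bil hi; omega

lemma springer_endrow (hn : lam.sum = n+1) {ℓ : Fin (n+1)}
    (hS : SpringerInvT (n+1) lam w (Fin.last n) ℓ) {i1 j1 : ℕ} (hb : IsBox lam i1 j1)
    (hlab : baseLabel lam i1 j1 = (w ℓ : ℕ)+1) : ¬ IsBox lam i1 (j1+1) := by
  simp only [SpringerInvT, HessInvT] at hS
  obtain ⟨hlk, ik, jk, il, jl, bik, bil, labk, labl, hpos, hlast⟩ := hS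
  obtain ⟨hi, hj⟩ := Aux.baseLabel_inj lam hb bil (hlab.trans labl.symm)
  subst hi; subst hj
  intro hb2
  have hp := Aux.baseLabel_pos lam hb2
  have hs := Aux.baseLabel_le_sum lam hb2
  rw [hn] at hs
  set r : Fin (n+1) := w.symm ⟨baseLabel lam i1 (j1+1) - 1, by omega⟩ with hrdef
  have hr : (w r : ℕ) + 1 = baseLabel lam i1 (j1+1) := by
    rw [hrdef, Equiv.apply_symm_apply]; simp; omega
  have hle := hlast r hb2 hr
  have hrlt : (r : ℕ) < n+1 := r.isLt
  simp only [Fin.val_last] at hle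
  omega

lemma springer_X1 (hn : lam.sum = n+1) {m : ℕ} {a : Fin (n+1)}
    (h : ((Xlam (n+1) lam)^(m+1)) a (w (Fin.last n)) ≠ 0) :
    (a:ℕ) < (w (Fin.last n) : ℕ) ∧
      ∀ ℓ, SpringerInvT (n+1) lam w (Fin.last n) ℓ → a ≠ w ℓ := by
  obtain ⟨i1, j1, b1, b1', l1, l1'⟩ := Xpow_supp m _ _ h
  constructor
  · have := Aux.baseLabel_lt_col lam (i1 := i1) (j1 := j1) b1' (by omega); omega
  · intro ℓ hS heq
    have hlab : baseLabel lam i1 j1 = (w ℓ : ℕ)+1 := by rw [l1, heq]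
    exact springer_endrow hn hS b1 hlab ⟨b1'.1, by have := b1'.2; omega⟩

lemma springer_X2 (hn : lam.sum = n+1) (hrs : RowStrictT (n+1) lam w) {ℓ : Fin (n+1)}
    (hS : SpringerInvT (n+1) lam w (Fin.last n) ℓ) {m : ℕ} {b : Fin (n+1)}
    (h : ((Xlam (n+1) lam)^(m+1)) b (w ℓ) ≠ 0) :
    (b:ℕ) ≠ (w (Fin.last n) : ℕ) := by
  obtain ⟨i2, j2, b2, b2', l2, l2'⟩ := Xpow_supp m _ _ h
  intro hb
  have hlt := rowchain hn hrs m i2 j2 b2' (Fin.last n) ℓ (by omega) (by omega)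
  have := hS.1
  exact absurd hlt (not_lt.2 (le_of_lt this))

lemma springer_X12 {ℓ : Fin (n+1)}
    (hS : SpringerInvT (n+1) lam w (Fin.last n) ℓ) {m : ℕ} {a b : Fin (n+1)}
    (h1 : ((Xlam (n+1) lam)^(m+1)) a (w (Fin.last n)) ≠ 0)
    (h2 : ((Xlam (n+1) lam)^(m+1)) b (w ℓ) ≠ 0) : (a:ℕ) < (b:ℕ) := by
  obtain ⟨i1, j1, c1, c1', m1, m1'⟩ := Xpow_supp m _ _ h1
  obtain ⟨i2, j2, c2, c2', m2, m2'⟩ := Xpow_supp m _ _ h2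
  have hS' := hS
  simp only [SpringerInvT, HessInvT] at hS'
  obtain ⟨hlk, ik, jk, il, jl, bik, bil, labk, labl, hpos, hlast⟩ := hS'
  obtain ⟨e1i, e1j⟩ := Aux.baseLabel_inj lam c1' bik (m1'.trans labk.symm)
  obtain ⟨e2i, e2j⟩ := Aux.baseLabel_inj lam c2' bil (m2'.trans labl.symm)
  rcases hpos with hj | ⟨hj, hi⟩
  · have hjj : j1 < j2 := by omega
    have := Aux.baseLabel_lt_col lam (i1 := i1) c2 hjj; omega
  · have hjj : j1 = j2 := by omega
    subst hjj
    have hii : i2 < i1 := by omega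
    have := Aux.baseLabel_lt_row lam c2 hii; omega

end MainAux

section PermAux

lemma vPerm_nil {n i0 : ℕ} (h : n ≤ i0) : vPerm n i0 = 1 := by
  rw [vPerm, List.Ico.eq_nil_of_le h, List.map_nil, List.prod_nil]

open Fin.NatCast in
lemma vPerm_cons {n i0 : ℕ} (h : i0 < n) :
    vPerm n i0 = Equiv.swap (i0 : Fin (n+1)) (((i0+1 : ℕ)) : Fin (n+1)) * vPerm n (i0+1) := by
  rw [vPerm, vPerm, List.Ico.eq_cons h, List.map_cons, List.prod_cons]

open Fin.NatCast in
lemma vPerm_val (n : ℕ) : ∀ (k i0 : ℕ), i0 ≤ n → n - i0 = k → ∀ a : Fin (n+1),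
    ((vPerm n i0) a : ℕ) =
      if (a:ℕ) < i0 then (a:ℕ) else if (a:ℕ) = n then i0 else (a:ℕ)+1 := by
  intro k
  induction k with
  | zero =>
    intro i0 h hk a
    have hi : i0 = n := by omega
    subst hi
    rw [vPerm_nil le_rfl]
    have ha := a.isLt
    simp only [Equiv.Perm.one_apply]
    split_ifs with h1 h2
    · rfl
    · exact h2
    · omega
  | succ k ih =>
    intro i0 h hk a
    have h0 : i0 < n := by omega
    rw [vPerm_cons h0, Equiv.Perm.mul_apply]
    have hb := ih (i0+1) (by omega) (by omega) a
    set b := vPerm n (i0+1) a with hbdef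
    have hv1 : ((i0 : Fin (n+1)) : ℕ) = i0 := Fin.val_cast_of_lt (by omega)
    have hv2 : (((i0+1 : ℕ) : Fin (n+1)) : ℕ) = i0+1 := Fin.val_cast_of_lt (by omega)
    have ha := a.isLt
    by_cases h1 : (a:ℕ) < i0
    · have hbv : (b:ℕ) = (a:ℕ) := by rw [hb, if_pos (by omega)]
      rw [Equiv.swap_apply_of_ne_of_ne
        (by intro e; have h' := congrArg Fin.val e; rw [hv1] at h'; omega)
        (by intro e; have h' := congrArg Fin.val e; rw [hv2] at h'; omega)]
      rw [hbv, if_pos h1]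
    · by_cases h2 : (a:ℕ) = i0
      · have hbv : (b:ℕ) = (a:ℕ) := by rw [hb, if_pos (by omega)]
        have hbb : b = (i0 : Fin (n+1)) := Fin.ext (by rw [hbv, h2, hv1])
        rw [hbb, Equiv.swap_apply_left, hv2, if_neg h1, if_neg (by omega)]
        omega
      · by_cases h3 : (a:ℕ) = n
        · have hbv : (b:ℕ) = i0+1 := by rw [hb, if_neg (by omega), if_pos h3]
          have hbb : b = ((i0+1 : ℕ) : Fin (n+1)) := Fin.ext (by rw [hbv, hv2])
          rw [hbb, Equiv.swap_apply_right, hv1, if_neg h1, if_pos h3]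
        · have hbv : (b:ℕ) = (a:ℕ)+1 := by rw [hb, if_neg (by omega), if_neg h3]
          rw [Equiv.swap_apply_of_ne_of_ne
            (by intro e; have h' := congrArg Fin.val e; rw [hv1] at h'; omega)
            (by intro e; have h' := congrArg Fin.val e; rw [hv2] at h'; omega)]
          rw [hbv, if_neg h1, if_neg h3]

lemma permMat_mul {N : ℕ} (σ τ : Equiv.Perm (Fin N)) :
    permMat N σ * permMat N τ = permMat N (σ * τ) := by
  ext a b
  rw [Matrix.mul_apply, Finset.sum_eq_single (τ b)]
  · show (if σ (τ b) = a then (1:ℂ) else 0) * (if τ b = τ b then (1:ℂ) else 0)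
      = (if (σ * τ) b = a then (1:ℂ) else 0)
    rw [if_pos rfl, mul_one, Equiv.Perm.mul_apply]
  · intro c _ hc
    show (if σ c = a then (1:ℂ) else 0) * (if τ b = c then (1:ℂ) else 0) = 0
    rw [if_neg (Ne.symm hc), mul_zero]
  · intro h; exact absurd (Finset.mem_univ _) h

lemma permMat_one {N : ℕ} : permMat N (1 : Equiv.Perm (Fin N)) = 1 := by
  ext a b
  show (if (1 : Equiv.Perm (Fin N)) b = a then (1:ℂ) else 0) = (1 : Matrix (Fin N) (Fin N) ℂ) a b
  rw [Matrix.one_apply, Equiv.Perm.one_apply]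
  by_cases h : a = b
  · subst h; rw [if_pos rfl]
  · rw [if_neg (Ne.symm h), if_neg h]

lemma permMat_mul_left {N : ℕ} (σ : Equiv.Perm (Fin N)) (M : Matrix (Fin N) (Fin N) ℂ)
    (a b : Fin N) : (permMat N σ * M) a b = M (σ⁻¹ a) b := by
  rw [Matrix.mul_apply, Finset.sum_eq_single (σ⁻¹ a)]
  · show (if σ (σ⁻¹ a) = a then (1:ℂ) else 0) * M (σ⁻¹ a) b = M (σ⁻¹ a) b
    rw [if_pos (show σ (σ⁻¹ a) = a from σ.apply_symm_apply a), one_mul]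
  · intro c _ hc
    show (if σ c = a then (1:ℂ) else 0) * M c b = 0
    rw [if_neg, zero_mul]
    intro e
    apply hc
    rw [← e]; exact (σ.symm_apply_apply c).symm
  · intro h; exact absurd (Finset.mem_univ _) h

lemma permMat_mul_right {N : ℕ} (M : Matrix (Fin N) (Fin N) ℂ) (σ : Equiv.Perm (Fin N))
    (a b : Fin N) : (M * permMat N σ) a b = M a (σ b) := by
  rw [Matrix.mul_apply, Finset.sum_eq_single (σ b)]
  · show M a (σ b) * (if σ b = σ b then (1:ℂ) else 0) = M a (σ b)
    rw [if_pos rfl, mul_one]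
  · intro c _ hc
    show M a c * (if σ b = c then (1:ℂ) else 0) = 0
    rw [if_neg (Ne.symm hc), mul_zero]
  · intro h; exact absurd (Finset.mem_univ _) h

end PermAux

section UiAux

lemma InUi_ext {N : ℕ} {i0 : Fin N} {u u' : Matrix (Fin N) (Fin N) ℂ}
    (h : InUi N i0 u) (h' : InUi N i0 u') (hrow : ∀ b, u i0 b = u' i0 b) : u = u' := by
  ext a b
  by_cases ha : a = i0
  · subst ha; exact hrow b
  · by_cases hab : a = b
    · subst hab; rw [h.1.1, h'.1.1]
    · by_cases h0 : u a b = 0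
      · rw [h0]
        by_cases h0' : u' a b = 0
        · rw [h0']
        · exact absurd (h'.2 a b hab h0') ha
      · exact absurd (h.2 a b hab h0) ha

lemma InUi_cancel {N : ℕ} {i0 : Fin N} {u : Matrix (Fin N) (Fin N) ℂ}
    (h : InUi N i0 u) {b b' : Matrix (Fin N) (Fin N) ℂ} (he : u * b = u * b') : b = b' := by
  have hN : (u - 1) * (u - 1) = 0 := by
    ext a c
    rw [Matrix.mul_apply]
    apply Finset.sum_eq_zero
    intro d _
    rw [Matrix.sub_apply, Matrix.sub_apply]
    by_cases had : a = d
    · subst had; rw [h.1.1, Matrix.one_apply_eq, sub_self, zero_mul]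
    · by_cases hdc : d = c
      · subst hdc; rw [h.1.1 d, Matrix.one_apply_eq, sub_self, mul_zero]
      · rw [Matrix.one_apply_ne had, Matrix.one_apply_ne hdc, sub_zero, sub_zero]
        by_cases h1 : u a d = 0
        · rw [h1, zero_mul]
        · by_cases h2 : u d c = 0
          · rw [h2, mul_zero]
          · exact absurd ((h.2 a d had h1).trans (h.2 d c hdc h2).symm) had
  have hinv : ((1 : Matrix (Fin N) (Fin N) ℂ) - (u - 1)) * u = 1 := by
    have hr : ((1 : Matrix (Fin N) (Fin N) ℂ) - (u - 1)) * u = 1 - (u - 1) * (u - 1) := by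
      noncomm_ring
    rw [hr, hN, sub_zero]
  have := congrArg (fun M => ((1 : Matrix (Fin N) (Fin N) ℂ) - (u - 1)) * M) he
  simpa only [← mul_assoc, hinv, one_mul] using this

lemma Matrix.zero_apply' {N : ℕ} (a b : Fin N) : (0 : Matrix (Fin N) (Fin N) ℂ) a b = 0 := rfl

end UiAux


/-- every `g_n ∈ B_n(w)` factors uniquely as `g_n = u_i · b_n` with `u_i ∈ U_i`
(`i = w(n)`), `b_n ∈ v U_0 v⁻¹`, and the `i`-th row of `u_i` equal to the `i`-th row of `g_n`. -/
theorem stmt13 (n : ℕ) (lam : List ℕ) (hn : lam.sum = n + 1)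
    (w v : Equiv.Perm (Fin (n+1))) (hv : v = vPerm n (w (Fin.last n) : ℕ))
    (hrs : RowStrictT (n+1) lam w)
    (x : Fin (n+1) → ℂ)
    (hx : ∀ ℓ, ¬ SpringerInvT (n+1) lam w (Fin.last n) ℓ → x ℓ = 0) :
    ∃! ub : Matrix (Fin (n+1)) (Fin (n+1)) ℂ × Matrix (Fin (n+1)) (Fin (n+1)) ℂ,
      InUi (n+1) (w (Fin.last n)) ub.1 ∧
      (∃ u0, InU0 n u0 ∧ ub.2 = permMat (n+1) v * u0 * permMat (n+1) v⁻¹) ∧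
      BkMat (n+1) lam w (Fin.last n) x = ub.1 * ub.2 ∧
      (∀ b : Fin (n+1),
        ub.1 (w (Fin.last n)) b = BkMat (n+1) lam w (Fin.last n) x (w (Fin.last n)) b) := by
  classical
  set A : Matrix (Fin (n+1)) (Fin (n+1)) ℂ :=
    ∑ ℓ : Fin (n+1), if SpringerInvT (n+1) lam w (Fin.last n) ℓ then
      x ℓ • Matrix.single (w (Fin.last n)) (w ℓ) (1:ℂ) else 0 with hAdef
  set B : Matrix (Fin (n+1)) (Fin (n+1)) ℂ :=
    ∑ ℓ : Fin (n+1), if SpringerInvT (n+1) lam w (Fin.last n) ℓ then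
      x ℓ • ∑ m ∈ Finset.range n,
        (Xlam (n+1) lam)^(m+1) * Matrix.single (w (Fin.last n)) (w ℓ) (1:ℂ) *
          ((Xlam (n+1) lam)ᵀ)^(m+1) else 0 with hBdef
  have hT : ∀ (ℓ : Fin (n+1)) (m : ℕ) (a b : Fin (n+1)),
      ((Xlam (n+1) lam)^(m+1) * Matrix.single (w (Fin.last n)) (w ℓ) (1:ℂ) *
        ((Xlam (n+1) lam)ᵀ)^(m+1)) a b
      = ((Xlam (n+1) lam)^(m+1)) a (w (Fin.last n)) * ((Xlam (n+1) lam)^(m+1)) b (w ℓ) := by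
    intro ℓ m a b
    rw [← Matrix.transpose_pow, triple_apply, Matrix.transpose_apply]
  have hsplit : BkMat (n+1) lam w (Fin.last n) x = 1 + A + B := by
    unfold BkMat
    rw [add_assoc]
    refine congrArg (fun M => (1 : Matrix (Fin (n+1)) (Fin (n+1)) ℂ) + M) ?_
    rw [hAdef, hBdef, ← Finset.sum_add_distrib]
    apply Finset.sum_congr rfl
    intro ℓ _
    by_cases hS : SpringerInvT (n+1) lam w (Fin.last n) ℓ
    · rw [if_pos hS, if_pos hS, if_pos hS, ← smul_add]
      congr 1
      rw [Finset.sum_range_succ', pow_zero, pow_zero, one_mul, mul_one]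
      exact add_comm _ _
    · rw [if_neg hS, if_neg hS, if_neg hS, add_zero]
  have hAsupp : ∀ a b : Fin (n+1), A a b ≠ 0 →
      a = w (Fin.last n) ∧ ∃ ℓ, SpringerInvT (n+1) lam w (Fin.last n) ℓ ∧ b = w ℓ := by
    intro a b hab
    rw [hAdef, Matrix.sum_apply] at hab
    obtain ⟨ℓ, _, hℓ⟩ := Finset.exists_ne_zero_of_sum_ne_zero hab
    by_cases hS : SpringerInvT (n+1) lam w (Fin.last n) ℓ
    · rw [if_pos hS, Matrix.smul_apply, smul_eq_mul] at hℓ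
      have hE := right_ne_zero_of_mul hℓ
      by_cases hc : w (Fin.last n) = a ∧ w ℓ = b
      · exact ⟨hc.1.symm, ℓ, hS, hc.2.symm⟩
      · exact absurd (Matrix.single_apply_of_ne (c := (1:ℂ)) (h := hc)) hE
    · rw [if_neg hS] at hℓ
      exact absurd rfl hℓ
  have hBgen : ∀ a b : Fin (n+1),
      (∀ ℓ, SpringerInvT (n+1) lam w (Fin.last n) ℓ → ∀ m : ℕ,
        ((Xlam (n+1) lam)^(m+1)) a (w (Fin.last n)) * ((Xlam (n+1) lam)^(m+1)) b (w ℓ) = 0) →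
      B a b = 0 := by
    intro a b hz
    rw [hBdef, Matrix.sum_apply]
    apply Finset.sum_eq_zero
    intro ℓ _
    by_cases hS : SpringerInvT (n+1) lam w (Fin.last n) ℓ
    · rw [if_pos hS, Matrix.smul_apply, Matrix.sum_apply]
      have hz' : ∑ m ∈ Finset.range n,
          ((Xlam (n+1) lam)^(m+1) * Matrix.single (w (Fin.last n)) (w ℓ) (1:ℂ) *
            ((Xlam (n+1) lam)ᵀ)^(m+1)) a b = 0 :=
        Finset.sum_eq_zero (fun m _ => by rw [hT ℓ m a b]; exact hz ℓ hS m)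
      rw [hz', smul_zero]
    · rw [if_neg hS]
      rfl
  have hBne : ∀ a b : Fin (n+1), B a b ≠ 0 →
      ∃ ℓ, SpringerInvT (n+1) lam w (Fin.last n) ℓ ∧ ∃ m : ℕ,
        ((Xlam (n+1) lam)^(m+1)) a (w (Fin.last n)) ≠ 0 ∧
          ((Xlam (n+1) lam)^(m+1)) b (w ℓ) ≠ 0 := by
    intro a b h
    by_contra hc
    push_neg at hc
    apply h
    apply hBgen a b
    intro ℓ hS m
    by_cases h1 : ((Xlam (n+1) lam)^(m+1)) a (w (Fin.last n)) = 0
    · rw [h1, zero_mul]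
    · rw [hc ℓ hS m h1, mul_zero]
  have hBrow : ∀ b, B (w (Fin.last n)) b = 0 := by
    intro b
    by_contra h
    obtain ⟨ℓ, hS, m, h1, h2⟩ := hBne _ _ h
    exact absurd (springer_X1 hn h1).1 (lt_irrefl _)
  have hBcol : ∀ a, B a (w (Fin.last n)) = 0 := by
    intro a
    by_contra h
    obtain ⟨ℓ, hS, m, h1, h2⟩ := hBne _ _ h
    exact (springer_X2 hn hrs hS h2) rfl
  have hBdiag : ∀ a, B a a = 0 := by
    intro a
    by_contra h
    obtain ⟨ℓ, hS, m, h1, h2⟩ := hBne _ _ h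
    exact absurd (springer_X12 hS h1 h2) (lt_irrefl _)
  have hBspr : ∀ ℓ', SpringerInvT (n+1) lam w (Fin.last n) ℓ' → ∀ b, B (w ℓ') b = 0 := by
    intro ℓ' hS' b
    by_contra h
    obtain ⟨ℓ, hS, m, h1, h2⟩ := hBne _ _ h
    exact absurd rfl ((springer_X1 hn h1).2 ℓ' hS')
  have hAB : A * B = 0 := by
    ext a b
    rw [Matrix.mul_apply, Matrix.zero_apply]
    apply Finset.sum_eq_zero
    intro c _
    by_cases h1 : A a c = 0
    · rw [h1, zero_mul]
    · obtain ⟨ha, ℓ, hS, hc⟩ := hAsupp a c h1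
      rw [hc, hBspr ℓ hS b, mul_zero]
  have hfact : BkMat (n+1) lam w (Fin.last n) x = (1 + A) * (1 + B) := by
    rw [hsplit]
    have he : (1 + A) * (1 + B) = 1 + A + B + A * B := by noncomm_ring
    rw [he, hAB, add_zero]
  have hUiu : InUi (n+1) (w (Fin.last n)) (1 + A) := by
    refine ⟨⟨?_, ?_⟩, ?_⟩
    · intro a
      have hA0 : A a a = 0 := by
        by_contra h
        obtain ⟨ha, ℓ, hS, hb⟩ := hAsupp a a h
        have hlt := springer_wlt hS
        rw [← ha, ← hb] at hlt
        exact absurd hlt (lt_irrefl _)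
      rw [Matrix.add_apply, hA0, add_zero, Matrix.one_apply_eq]
    · intro a b hba
      have hA0 : A a b = 0 := by
        by_contra h
        obtain ⟨ha, ℓ, hS, hb⟩ := hAsupp a b h
        have hlt := springer_wlt hS
        rw [← ha, ← hb] at hlt
        have hba' : (b:ℕ) < (a:ℕ) := hba
        omega
      rw [Matrix.add_apply, hA0, add_zero, Matrix.one_apply_ne (ne_of_gt hba)]
    · intro a b hab hne
      have hA0 : A a b ≠ 0 := by
        intro h0
        apply hne
        rw [Matrix.add_apply, h0, add_zero, Matrix.one_apply_ne hab]
      exact (hAsupp a b hA0).1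
  have hroweq : ∀ b, (1 + A) (w (Fin.last n)) b
      = BkMat (n+1) lam w (Fin.last n) x (w (Fin.last n)) b := by
    intro b
    rw [hsplit, Matrix.add_apply (1 + A) B, hBrow b, add_zero]
  have hiNn : (w (Fin.last n) : ℕ) ≤ n := Nat.lt_succ_iff.mp (w (Fin.last n)).isLt
  have hvval : ∀ a : Fin (n+1), ((v a : Fin (n+1)) : ℕ) =
      if (a:ℕ) < (w (Fin.last n) : ℕ) then (a:ℕ)
      else if (a:ℕ) = n then (w (Fin.last n) : ℕ) else (a:ℕ)+1 := by
    intro a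
    rw [hv]
    exact vPerm_val n (n - (w (Fin.last n) : ℕ)) _ hiNn rfl a
  have hvlast : v (Fin.last n) = w (Fin.last n) := by
    apply Fin.ext
    rw [hvval]
    have hl : ((Fin.last n : Fin (n+1)) : ℕ) = n := Fin.val_last n
    split_ifs <;> omega
  have hu0app : ∀ a b : Fin (n+1),
      (permMat (n+1) v⁻¹ * (1 + B) * permMat (n+1) v) a b = (1 + B) (v a) (v b) := by
    intro a b
    rw [permMat_mul_right, permMat_mul_left, inv_inv]
  have hInU0 : InU0 n (permMat (n+1) v⁻¹ * (1 + B) * permMat (n+1) v) := by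
    refine ⟨⟨?_, ?_⟩, ?_⟩
    · intro a
      rw [hu0app, Matrix.add_apply, hBdiag, add_zero, Matrix.one_apply_eq]
    · intro a b hba
      rw [hu0app, Matrix.add_apply]
      have h1 : (1 : Matrix (Fin (n+1)) (Fin (n+1)) ℂ) (v a) (v b) = 0 :=
        Matrix.one_apply_ne (fun e => (ne_of_gt hba) (v.injective e))
      have h2 : B (v a) (v b) = 0 := by
        by_contra h
        obtain ⟨ℓ, hS, m, hf1, hf2⟩ := hBne _ _ h
        have c1 := (springer_X1 hn hf1).1
        have c2 := springer_X2 hn hrs hS hf2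
        have c3 := springer_X12 hS hf1 hf2
        have pa := hvval a
        have pb := hvval b
        have ha' := a.isLt
        have hb' := b.isLt
        have hba' : (b:ℕ) < (a:ℕ) := hba
        split_ifs at pa pb <;> omega
      rw [h1, h2, add_zero]
    · intro a ha
      rw [hu0app, hvlast, Matrix.add_apply, hBcol, add_zero]
      refine Matrix.one_apply_ne (fun e => ha ?_)
      exact v.injective (e.trans hvlast.symm)
  have hconj : (1 : Matrix (Fin (n+1)) (Fin (n+1)) ℂ) + B
      = permMat (n+1) v * (permMat (n+1) v⁻¹ * (1 + B) * permMat (n+1) v) * permMat (n+1) v⁻¹ := by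
    have e1 : permMat (n+1) v * permMat (n+1) v⁻¹ = 1 := by
      rw [permMat_mul, mul_inv_cancel, permMat_one]
    have e2 : permMat (n+1) v * (permMat (n+1) v⁻¹ * (1 + B) * permMat (n+1) v) * permMat (n+1) v⁻¹
        = (permMat (n+1) v * permMat (n+1) v⁻¹) * (1 + B) *
          (permMat (n+1) v * permMat (n+1) v⁻¹) := by
      noncomm_ring
    rw [e2, e1, one_mul, mul_one]
  refine ⟨(1 + A, 1 + B), ⟨hUiu, ⟨permMat (n+1) v⁻¹ * (1 + B) * permMat (n+1) v, hInU0, hconj⟩,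
    hfact, hroweq⟩, ?_⟩
  rintro ⟨u', b'⟩ ⟨hU', hB'ex, hfact', hrow'⟩
  have hueq : u' = 1 + A := by
    apply InUi_ext hU' hUiu
    intro b
    rw [hrow' b]
    exact (hroweq b).symm
  have hbeq : b' = 1 + B := by
    apply InUi_cancel hUiu
    show (1 + A) * b' = (1 + A) * (1 + B)
    rw [← hueq, ← hfact', hfact, hueq]
  exact Prod.ext hueq hbeq
end
end
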